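/- arXiv:0809.1135 — 4 statements merged into one kernel-verified Lean document; each statement's English description precedes it below -/
import Mathlib

section
/- In the stratified-sampling setup, assume Σ_j p_j σ_j > 0 and let Q*(μ) be the optimal allocation with q*_i = p_i σ_i / Σ_j p_j σ_j. Then for all positive integers M, I and every real ε > 1, |M ς²_{I,M}(μ,g,Q*(μ)) − Σ_{i∈{1,…,I}^m} p_i² σ_i² / q*_i| ≤ Var(φ(Y)) · ((1+ε) I^m / M + 1/(ε−1)), where Var(φ(Y)) = E[φ(Y)²] − (E[φ(Y)])² and by convention p_i²σ_i²/q*_i = 0 when q*_i = 0. -/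
open MeasureTheory Set Filter
open scoped ENNReal Topology

noncomputable section

namespace Strat

/-- Cumulative distribution function associated with a probability density `g` on `ℝ`. -/
def cdf (g : ℝ → ℝ) (x : ℝ) : ℝ := ∫ t in Iic x, g t

/-- Quantile function `G⁻¹(u) = inf {x ∈ {G > 0} : G x ≥ u}`, with values in `EReal`
(so that `inf ∅ = +∞`). -/
def qf (g : ℝ → ℝ) (u : ℝ) : EReal :=
  sInf {e : EReal | ∃ x : ℝ, e = (x : EReal) ∧ 0 < cdf g x ∧ u ≤ cdf g x}

/-- Index set `{1, …, I}^m` for the strata, carrying the lexicographic order. -/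
abbrev Idx (m I : ℕ) := Lex (Fin m → Fin I)

noncomputable instance {m I : ℕ} : LinearOrder (Idx m I) :=
  haveI h : WellFoundedLT (Fin m) := inferInstance
  @Pi.Lex.linearOrder (Fin m) (fun _ => Fin I) Fin.instLinearOrder h
    (fun _ => Fin.instLinearOrder)

instance {m I : ℕ} : Fintype (Idx m I) := inferInstanceAs (Fintype (Fin m → Fin I))

/-- The stratum `S_i = ∏_k (G_k⁻¹((i_k - 1)/I), G_k⁻¹(i_k/I)]`
(the value `j : Fin I` encodes `i_k = j + 1 ∈ {1, …, I}`). -/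
def stratum {m : ℕ} (g : Fin m → ℝ → ℝ) (I : ℕ) (i : Idx m I) : Set (Fin m → ℝ) :=
  {x | ∀ k : Fin m,
    qf (g k) (((ofLex i k : ℕ) : ℝ) / I) < (x k : EReal) ∧
      (x k : EReal) ≤ qf (g k) ((((ofLex i k : ℕ) : ℝ) + 1) / I)}

/-- Number of draws `M_i = ⌊M ∑_{j ≤ i} q_j⌋ - ⌊M ∑_{j < i} q_j⌋` allocated to stratum `i`. -/
def Mdraw {m I : ℕ} (q : Idx m I → ℝ) (M : ℕ) (i : Idx m I) : ℤ :=
  ⌊(M : ℝ) * ∑ j ∈ Finset.univ.filter (fun j => j ≤ i), q j⌋ -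
    ⌊(M : ℝ) * ∑ j ∈ @Finset.filter _ (fun j => j < i) (fun j => LinearOrder.toDecidableLT j i) Finset.univ, q j⌋

/-- The quantity `p_i² σ_i² = (∫_{S_i} f)(∫_{S_i} v f) - (∫_{S_i} ς f)²`. -/
def p2σ2 {m : ℕ} (f ς v : (Fin m → ℝ) → ℝ) (g : Fin m → ℝ → ℝ) (I : ℕ) (i : Idx m I) : ℝ :=
  (∫ x in stratum g I i, f x) * (∫ x in stratum g I i, v x * f x) -
    (∫ x in stratum g I i, ς x * f x) ^ 2

/-- Scaled variance `ς²_{I,M}(μ, g, Q) = ∑_{i : M_i > 0} M_i⁻¹ p_i² σ_i²` of the stratified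
estimator. -/
def stratVar {m : ℕ} (f ς v : (Fin m → ℝ) → ℝ) (g : Fin m → ℝ → ℝ) (I : ℕ)
    (q : Idx m I → ℝ) (M : ℕ) : ℝ :=
  ∑ i ∈ Finset.univ.filter (fun i => 0 < Mdraw q M i),
    ((Mdraw q M i : ℝ))⁻¹ * p2σ2 f ς v g I i

/-- The product density `g(x) = ∏_k g_k(x_k)` on `ℝ^m`. -/
def prodDens {m : ℕ} (g : Fin m → ℝ → ℝ) (x : Fin m → ℝ) : ℝ := ∏ k, g k (x k)

/-- monotonicity of the quantile function -/
theorem qf_mono (g : ℝ → ℝ) {u u' : ℝ} (h : u ≤ u') : qf g u ≤ qf g u' := by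
  apply sInf_le_sInf
  rintro e ⟨x, rfl, h1, h2⟩
  exact ⟨x, rfl, h1, le_trans h h2⟩

/-- strata are measurable -/
theorem stratum_measurable {m : ℕ} (g : Fin m → ℝ → ℝ) (I : ℕ) (i : Idx m I) :
    MeasurableSet (stratum g I i) := by
  have : stratum g I i = ⋂ k : Fin m,
      (fun x : Fin m → ℝ => x k) ⁻¹'
        {t : ℝ | qf (g k) (((ofLex i k : ℕ) : ℝ) / I) < (t : EReal) ∧
          (t : EReal) ≤ qf (g k) ((((ofLex i k : ℕ) : ℝ) + 1) / I)} := by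
    ext x; simp [stratum, Set.mem_iInter]
  rw [this]
  apply MeasurableSet.iInter
  intro k
  apply (measurable_pi_apply k)
  have : {t : ℝ | qf (g k) (((ofLex i k : ℕ) : ℝ) / I) < (t : EReal) ∧
      (t : EReal) ≤ qf (g k) ((((ofLex i k : ℕ) : ℝ) + 1) / I)}
      = ((↑) : ℝ → EReal) ⁻¹' (Set.Ioc (qf (g k) (((ofLex i k : ℕ) : ℝ) / I))
          (qf (g k) ((((ofLex i k : ℕ) : ℝ) + 1) / I))) := rfl
  rw [this]
  exact measurable_coe_real_ereal measurableSet_Ioc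

/-- strata are pairwise disjoint -/
theorem stratum_disjoint {m : ℕ} (g : Fin m → ℝ → ℝ) (I : ℕ) :
    Pairwise (Function.onFun Disjoint (stratum g I)) := by
  intro i j hij
  have hex : ∃ k : Fin m, ofLex i k ≠ ofLex j k := by
    by_contra h
    push_neg at h
    exact hij (ofLex.injective (funext h))
  obtain ⟨k, hk⟩ := hex
  have key : ∀ i' j' : Idx m I, ofLex i' k < ofLex j' k →
      Disjoint (stratum g I i') (stratum g I j') := by
    intro i' j' hlt
    rw [Set.disjoint_left]
    intro x hx hx'
    have h1 := (hx k).2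
    have h2 := (hx' k).1
    have hle : ((ofLex i' k : ℕ) : ℝ) + 1 ≤ ((ofLex j' k : ℕ) : ℝ) := by
      have : (ofLex i' k : ℕ) + 1 ≤ (ofLex j' k : ℕ) := hlt
      exact_mod_cast this
    have hI0 : (0 : ℝ) ≤ (I : ℝ) := Nat.cast_nonneg I
    have hmono : qf (g k) ((((ofLex i' k : ℕ) : ℝ) + 1) / I)
        ≤ qf (g k) (((ofLex j' k : ℕ) : ℝ) / I) :=
      qf_mono (g k) (div_le_div_of_nonneg_right hle hI0)
    exact absurd (lt_of_le_of_lt (le_trans h1 hmono) h2) (lt_irrefl _)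
  rcases lt_or_gt_of_ne hk with h | h
  · exact key i j h
  · exact (key j i h).symm

end Strat

section Aux
variable {ι : Type*} [Fintype ι]

theorem aux_sqrt_sum_sq_le (P V C : ι → ℝ) (hP : ∀ i, 0 ≤ P i) (hV : ∀ i, 0 ≤ V i)
    (hCS : ∀ i, C i ^ 2 ≤ P i * V i) (hP1 : ∑ i, P i ≤ 1) :
    (∑ i, Real.sqrt (P i * V i - C i ^ 2)) ^ 2 ≤ (∑ i, V i) - (∑ i, C i) ^ 2 := by
  classical
  set w : ι → ℝ := fun i => V i - C i ^ 2 / P i with hw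
  have hC0 : ∀ i, P i = 0 → C i = 0 := by
    intro i h
    have := hCS i
    rw [h, zero_mul] at this
    nlinarith [sq_nonneg (C i)]
  have hw0 : ∀ i, 0 ≤ w i := by
    intro i
    rcases eq_or_lt_of_le (hP i) with h | h
    · simp [hw, ← h, hV i]
    · have : C i ^ 2 / P i ≤ V i := by
        rw [div_le_iff₀ h]
        linarith [hCS i, mul_comm (P i) (V i)]
      simpa [hw] using this
  have hr : ∀ i ∈ Finset.univ, Real.sqrt (P i * V i - C i ^ 2) ^ 2 = P i * w i := by
    intro i _
    rcases eq_or_lt_of_le (hP i) with h | h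
    · simp [← h, hC0 i h.symm]
    · have h1 : P i * w i = P i * V i - C i ^ 2 := by
        rw [hw]; dsimp only; rw [mul_sub, mul_div_assoc', mul_div_cancel_left₀ _ (ne_of_gt h)]
      rw [h1, Real.sq_sqrt (by nlinarith [hCS i])]
  have key1 : (∑ i, Real.sqrt (P i * V i - C i ^ 2)) ^ 2 ≤ (∑ i, P i) * ∑ i, w i :=
    Finset.sum_sq_le_sum_mul_sum_of_sq_eq_mul Finset.univ (fun i _ => hP i) (fun i _ => hw0 i) hr
  have hwsum : 0 ≤ ∑ i, w i := Finset.sum_nonneg fun i _ => hw0 i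
  have key1' : (∑ i, Real.sqrt (P i * V i - C i ^ 2)) ^ 2 ≤ ∑ i, w i := by
    calc (∑ i, Real.sqrt (P i * V i - C i ^ 2)) ^ 2 ≤ (∑ i, P i) * ∑ i, w i := key1
    _ ≤ 1 * ∑ i, w i := mul_le_mul_of_nonneg_right hP1 hwsum
    _ = ∑ i, w i := one_mul _
  have key2 : (∑ i, C i) ^ 2 ≤ ∑ i, C i ^ 2 / P i := by
    have h2 : (∑ i, C i) ^ 2 ≤ (∑ i, P i) * ∑ i, C i ^ 2 / P i := by
      apply Finset.sum_sq_le_sum_mul_sum_of_sq_eq_mul Finset.univ (fun i _ => hP i)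
        (fun i _ => div_nonneg (sq_nonneg _) (hP i))
      intro i _
      rcases eq_or_lt_of_le (hP i) with h | h
      · simp [← h, hC0 i h.symm]
      · field_simp
    have h3 : 0 ≤ ∑ i, C i ^ 2 / P i :=
      Finset.sum_nonneg fun i _ => div_nonneg (sq_nonneg _) (hP i)
    nlinarith
  have hsw : ∑ i, w i = (∑ i, V i) - ∑ i, C i ^ 2 / P i := by
    simp [hw, Finset.sum_sub_distrib]
  linarith [key1', key2, hsw.le]

end Aux

theorem aux_int_cs {Ω : Type*} [MeasurableSpace Ω] (μ : Measure Ω) [IsFiniteMeasure μ]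
    {f : Ω → ℝ} (h1 : Integrable f μ) (h2 : Integrable (fun ω => f ω ^ 2) μ) :
    (∫ ω, f ω ∂μ) ^ 2 ≤ (μ Set.univ).toReal * ∫ ω, f ω ^ 2 ∂μ := by
  set m := (μ Set.univ).toReal with hm
  have hm0 : 0 ≤ m := ENNReal.toReal_nonneg
  rcases eq_or_lt_of_le hm0 with h | h
  · have h0 : μ Set.univ = 0 :=
      ((ENNReal.toReal_eq_zero_iff _).mp h.symm).resolve_right (measure_ne_top μ Set.univ)
    have hμ0 : μ = 0 := Measure.measure_univ_eq_zero.mp h0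
    simp [hμ0, ← h]
  · set c := (∫ ω, f ω ∂μ) / m with hc
    have key : 0 ≤ ∫ ω, (f ω - c) ^ 2 ∂μ := integral_nonneg fun ω => sq_nonneg _
    have hexp : ∫ ω, (f ω - c) ^ 2 ∂μ
        = (∫ ω, f ω ^ 2 ∂μ) - 2 * c * (∫ ω, f ω ∂μ) + c ^ 2 * m := by
      have e1 : ∀ ω : Ω, (f ω - c) ^ 2 = f ω ^ 2 - 2 * c * f ω + c ^ 2 := by intro ω; ring
      simp_rw [e1]
      have ha : Integrable (fun ω => f ω ^ 2 - 2 * c * f ω) μ := by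
        exact h2.sub (h1.const_mul (2 * c))
      rw [integral_add ha (integrable_const _),
        integral_sub h2 (h1.const_mul (2 * c)), integral_const, smul_eq_mul, hm]
      have : ∫ a, 2 * c * f a ∂μ = 2 * c * ∫ a, f a ∂μ := integral_const_mul (2 * c) f
      rw [this]
      simp only [measureReal_def]; ring
    have hmne : m ≠ 0 := ne_of_gt h
    have key2 : (∫ ω, f ω ∂μ) ^ 2 / m ≤ ∫ ω, f ω ^ 2 ∂μ := by
      have e2 : 2 * c * (∫ ω, f ω ∂μ) - c ^ 2 * m = (∫ ω, f ω ∂μ) ^ 2 / m := by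
        rw [hc]; field_simp; ring
      linarith [key, hexp.le, hexp.ge]
    rw [div_le_iff₀ h] at key2
    linarith [key2, mul_comm (∫ ω, f ω ^ 2 ∂μ) m]


set_option maxHeartbeats 1000000 in
theorem key_arith {ι : Type*} [Fintype ι] (a q : ι → ℝ) (N : ι → ℤ) (M : ℕ) (hM : 0 < M)
    (ε K : ℝ) (hε : 1 < ε)
    (hpos : 0 < ∑ j, Real.sqrt (a j))
    (hK : (∑ j, Real.sqrt (a j)) ^ 2 ≤ K)
    (hq : ∀ i, q i = Real.sqrt (a i) / ∑ j, Real.sqrt (a j))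
    (hN0 : ∀ i, 0 ≤ N i)
    (hNlb : ∀ i, (M : ℝ) * q i - 1 < (N i : ℝ))
    (hNub : ∀ i, (N i : ℝ) < (M : ℝ) * q i + 1)
    (hNq0 : ∀ i, q i = 0 → N i = 0) :
    |(M : ℝ) * (∑ i ∈ Finset.univ.filter (fun i => 0 < N i), ((N i : ℝ))⁻¹ * a i)
        - ∑ i, a i / q i|
      ≤ K * ((1 + ε) * (Fintype.card ι : ℝ) / M + 1 / (ε - 1)) := by
  classical
  set s : ι → ℝ := fun i => Real.sqrt (a i) with hs
  set T : ℝ := ∑ j, s j with hT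
  have hs0 : ∀ i, 0 ≤ s i := fun i => Real.sqrt_nonneg _
  have hTpos : 0 < T := hpos
  have hMpos : (0 : ℝ) < (M : ℝ) := by exact_mod_cast hM
  have hε1 : (0 : ℝ) < ε - 1 := by linarith
  have hsq : ∀ i, 0 < s i → a i = s i ^ 2 := by
    intro i hi
    have h0 : 0 ≤ a i := by
      by_contra hneg
      push_neg at hneg
      have : s i = 0 := Real.sqrt_eq_zero'.mpr hneg.le
      exact absurd this (ne_of_gt hi)
    exact (Real.sq_sqrt h0).symm
  have hq0 : ∀ i, 0 ≤ q i := by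
    intro i; rw [hq i]; exact div_nonneg (hs0 i) hTpos.le
  have hsqT : ∀ i, s i = q i * T := by
    intro i; rw [hq i]; field_simp; rfl
  have hqsum : ∑ i, q i = 1 := by
    simp_rw [hq]
    rw [← Finset.sum_div, div_self (ne_of_gt hTpos)]
  -- rewrite the second sum
  have step0 : ∑ i, a i / q i = ∑ i, s i * T := by
    apply Finset.sum_congr rfl
    intro i _
    by_cases hsi : s i = 0
    · rw [hq i, show Real.sqrt (a i) = 0 from hsi, zero_div, div_zero,
        show s i = 0 from hsi, zero_mul]
    · have hip : 0 < s i := lt_of_le_of_ne (hs0 i) (Ne.symm hsi)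
      rw [hq i]
      show a i / (s i / T) = s i * T
      rw [hsq i hip]
      rw [div_div_eq_mul_div, pow_two, mul_right_comm, mul_div_assoc,
        div_self hsi, mul_one]
  set B : Finset ι := Finset.univ.filter (fun i => 0 < N i) with hB
  -- per-element bound on B
  have hbnd : ∀ i ∈ B, |(M : ℝ) * ((N i : ℝ)⁻¹ * a i) - s i * T|
      ≤ if (M : ℝ) * q i ≤ ε then ε * T ^ 2 / M else ε * T ^ 2 / ((ε - 1) * M) := by
    intro i hiB
    have hNi : 0 < N i := (Finset.mem_filter.mp hiB).2
    have hNR : (1 : ℝ) ≤ (N i : ℝ) := by exact_mod_cast hNi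
    have hNRpos : (0 : ℝ) < (N i : ℝ) := by linarith
    have hqi : 0 < q i := by
      rcases eq_or_lt_of_le (hq0 i) with h | h
      · exact absurd (hNq0 i h.symm) (ne_of_gt hNi)
      · exact h
    have hsi : 0 < s i := by rw [hsqT i]; positivity
    have hai : a i = s i ^ 2 := hsq i hsi
    have hid : (M : ℝ) * ((N i : ℝ)⁻¹ * a i) - s i * T
        = s i * T * (((M : ℝ) * q i - (N i : ℝ)) / (N i : ℝ)) := by
      rw [hai]
      rw [hsqT i]
      field_simp
    have habs : |(M : ℝ) * ((N i : ℝ)⁻¹ * a i) - s i * T|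
        ≤ s i * T / (N i : ℝ) := by
      have h1 : |(M : ℝ) * q i - (N i : ℝ)| ≤ 1 := by
        rw [abs_le]
        constructor
        · linarith [hNub i]
        · linarith [hNlb i]
      rw [hid, abs_mul, abs_of_nonneg (by positivity : (0:ℝ) ≤ s i * T), abs_div,
        abs_of_nonneg hNRpos.le]
      calc s i * T * (|(M : ℝ) * q i - (N i : ℝ)| / (N i : ℝ))
          ≤ s i * T * (1 / (N i : ℝ)) := by
            apply mul_le_mul_of_nonneg_left _ (by positivity : (0:ℝ) ≤ s i * T)
            exact div_le_div_of_nonneg_right h1 hNRpos.le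
        _ = s i * T / (N i : ℝ) := by rw [mul_one_div]
    by_cases hcase : (M : ℝ) * q i ≤ ε
    · rw [if_pos hcase]
      have h2 : s i * T / (N i : ℝ) ≤ s i * T := by
        rw [div_le_iff₀ hNRpos]
        nlinarith [mul_nonneg (hs0 i) hTpos.le]
      have h3 : s i * T = q i * T ^ 2 := by rw [hsqT i]; ring
      have h4 : q i * T ^ 2 ≤ ε * T ^ 2 / M := by
        rw [le_div_iff₀ hMpos]
        have : (M : ℝ) * q i ≤ ε := hcase
        nlinarith [sq_nonneg T]
      linarith [habs, h2, h3.le, h3.ge, h4]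
    · rw [if_neg hcase]
      push_neg at hcase
      have hNlow : (M : ℝ) * q i * (ε - 1) / ε < (N i : ℝ) := by
        have h5 : (M : ℝ) * q i * (ε - 1) / ε ≤ (M : ℝ) * q i - 1 := by
          rw [div_le_iff₀ (by linarith : (0:ℝ) < ε)]
          nlinarith
        linarith [hNlb i]
      have hden : (0 : ℝ) < (M : ℝ) * q i * (ε - 1) / ε := by positivity
      have h6 : s i * T / (N i : ℝ) ≤ s i * T / ((M : ℝ) * q i * (ε - 1) / ε) := by
        apply div_le_div_of_nonneg_left (by positivity) hden hNlow.le
      have h7 : s i * T / ((M : ℝ) * q i * (ε - 1) / ε) = ε * T ^ 2 / ((ε - 1) * M) := by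
        rw [hsqT i]
        field_simp
      linarith [habs, h6, h7.le, h7.ge]
  -- bound on the complement
  have hcbnd : ∀ i ∈ Finset.univ.filter (fun i => ¬ 0 < N i), s i * T ≤ T ^ 2 / M := by
    intro i hi
    have hNi : ¬ 0 < N i := (Finset.mem_filter.mp hi).2
    have hN0i : N i = 0 := le_antisymm (not_lt.mp hNi) (hN0 i)
    have hq1 : (M : ℝ) * q i < 1 := by
      have := hNlb i
      rw [hN0i] at this
      push_cast at this
      linarith
    have h3 : s i * T = q i * T ^ 2 := by rw [hsqT i]; ring
    rw [h3, le_div_iff₀ hMpos]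
    nlinarith [sq_nonneg T, hq0 i]
  -- main decomposition
  have hsplit : ∑ i, s i * T = (∑ i ∈ B, s i * T) + ∑ i ∈ Finset.univ.filter (fun i => ¬ 0 < N i), s i * T := by
    rw [hB]
    exact (Finset.sum_filter_add_sum_filter_not Finset.univ _ _).symm
  have hdecomp : (M : ℝ) * (∑ i ∈ B, (N i : ℝ)⁻¹ * a i) - ∑ i, a i / q i
      = (∑ i ∈ B, ((M : ℝ) * ((N i : ℝ)⁻¹ * a i) - s i * T))
        - ∑ i ∈ Finset.univ.filter (fun i => ¬ 0 < N i), s i * T := by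
    rw [step0, hsplit, Finset.mul_sum, Finset.sum_sub_distrib]
    ring
  rw [hdecomp]
  have habs2 : |(∑ i ∈ B, ((M : ℝ) * ((N i : ℝ)⁻¹ * a i) - s i * T))
        - ∑ i ∈ Finset.univ.filter (fun i => ¬ 0 < N i), s i * T|
      ≤ (∑ i ∈ B, |(M : ℝ) * ((N i : ℝ)⁻¹ * a i) - s i * T|)
        + ∑ i ∈ Finset.univ.filter (fun i => ¬ 0 < N i), s i * T := by
    refine (abs_sub _ _).trans ?_
    gcongr
    · exact Finset.abs_sum_le_sum_abs _ _
    · rw [abs_of_nonneg (Finset.sum_nonneg fun i _ => mul_nonneg (hs0 i) hTpos.le)]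
  refine habs2.trans ?_
  -- bound each sum
  have hsum1 : (∑ i ∈ B, |(M : ℝ) * ((N i : ℝ)⁻¹ * a i) - s i * T|)
      ≤ ∑ i ∈ B, (if (M : ℝ) * q i ≤ ε then ε * T ^ 2 / M else ε * T ^ 2 / ((ε - 1) * M)) :=
    Finset.sum_le_sum hbnd
  have hsum2 : (∑ i ∈ Finset.univ.filter (fun i => ¬ 0 < N i), s i * T)
      ≤ (Finset.univ.filter (fun i => ¬ 0 < N i)).card * (T ^ 2 / M) := by
    calc (∑ i ∈ Finset.univ.filter (fun i => ¬ 0 < N i), s i * T)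
        ≤ ∑ _i ∈ Finset.univ.filter (fun i => ¬ 0 < N i), T ^ 2 / M := Finset.sum_le_sum hcbnd
      _ = (Finset.univ.filter (fun i => ¬ 0 < N i)).card * (T ^ 2 / M) := by
          rw [Finset.sum_const, nsmul_eq_mul]
  -- split the if sum
  set B1 : Finset ι := B.filter (fun i => (M : ℝ) * q i ≤ ε) with hB1
  set B2 : Finset ι := B.filter (fun i => ¬ (M : ℝ) * q i ≤ ε) with hB2
  have hifsum : (∑ i ∈ B, (if (M : ℝ) * q i ≤ ε then ε * T ^ 2 / M else ε * T ^ 2 / ((ε - 1) * M)))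
      = B1.card * (ε * T ^ 2 / M) + B2.card * (ε * T ^ 2 / ((ε - 1) * M)) := by
    rw [Finset.sum_ite, Finset.sum_const, Finset.sum_const, nsmul_eq_mul, nsmul_eq_mul]
  -- cardinality bounds
  have hcard0 : ((Finset.univ.filter (fun i => ¬ 0 < N i)).card : ℝ) ≤ (Fintype.card ι : ℝ) := by
    exact_mod_cast Finset.card_le_univ _
  have hcard1 : (B1.card : ℝ) ≤ (Fintype.card ι : ℝ) := by
    exact_mod_cast Finset.card_le_univ _
  have hcard2 : (B2.card : ℝ) * ε ≤ (M : ℝ) := by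
    have h1 : (B2.card : ℝ) * ε = ∑ _i ∈ B2, ε := by
      rw [Finset.sum_const, nsmul_eq_mul]
    have h2 : ∑ _i ∈ B2, ε ≤ ∑ i ∈ B2, (M : ℝ) * q i := by
      apply Finset.sum_le_sum
      intro i hi
      have := (Finset.mem_filter.mp hi).2
      push_neg at this
      exact this.le
    have h3 : ∑ i ∈ B2, (M : ℝ) * q i ≤ ∑ i, (M : ℝ) * q i := by
      apply Finset.sum_le_sum_of_subset_of_nonneg (Finset.subset_univ _)
      intro i _ _
      exact mul_nonneg hMpos.le (hq0 i)
    have h4 : ∑ i, (M : ℝ) * q i = (M : ℝ) := by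
      rw [← Finset.mul_sum, hqsum, mul_one]
    linarith
  -- assemble
  have hA3 : (B2.card : ℝ) * (ε * T ^ 2 / ((ε - 1) * M)) ≤ T ^ 2 / (ε - 1) := by
    have e1 : (B2.card : ℝ) * (ε * T ^ 2 / ((ε - 1) * M))
        = ((B2.card : ℝ) * ε) * (T ^ 2 / ((ε - 1) * M)) := by ring
    rw [e1]
    calc ((B2.card : ℝ) * ε) * (T ^ 2 / ((ε - 1) * M))
        ≤ (M : ℝ) * (T ^ 2 / ((ε - 1) * M)) := by
          apply mul_le_mul_of_nonneg_right hcard2 (by positivity)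
      _ = T ^ 2 / (ε - 1) := by field_simp
  have hA1 : (B1.card : ℝ) * (ε * T ^ 2 / M) ≤ (Fintype.card ι : ℝ) * (ε * T ^ 2 / M) :=
    mul_le_mul_of_nonneg_right hcard1 (by positivity)
  have hA0 : ((Finset.univ.filter (fun i => ¬ 0 < N i)).card : ℝ) * (T ^ 2 / M)
      ≤ (Fintype.card ι : ℝ) * (T ^ 2 / M) :=
    mul_le_mul_of_nonneg_right hcard0 (by positivity)
  have hfinal : (Fintype.card ι : ℝ) * (ε * T ^ 2 / M) + T ^ 2 / (ε - 1)
      + (Fintype.card ι : ℝ) * (T ^ 2 / M)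
      = T ^ 2 * ((1 + ε) * (Fintype.card ι : ℝ) / M + 1 / (ε - 1)) := by
    have hM' : (M : ℝ) ≠ 0 := ne_of_gt hMpos
    have hε' : ε - 1 ≠ 0 := ne_of_gt hε1
    field_simp
    ring
  have hcoef : 0 ≤ (1 + ε) * (Fintype.card ι : ℝ) / M + 1 / (ε - 1) := by positivity
  have hlast : T ^ 2 * ((1 + ε) * (Fintype.card ι : ℝ) / M + 1 / (ε - 1))
      ≤ K * ((1 + ε) * (Fintype.card ι : ℝ) / M + 1 / (ε - 1)) :=
    mul_le_mul_of_nonneg_right hK hcoef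
  linarith [hsum1, hsum2, hifsum.le, hifsum.ge, hA0, hA1, hA3, hfinal.le, hfinal.ge, hlast]


/-- `∫_S f ≤ (∫⁻_S ofReal f).toReal` for measurable `f` with finite upper integral. -/
theorem aux_int_le_lint {m : ℕ} (f : (Fin m → ℝ) → ℝ) (hf : Measurable f)
    (S : Set (Fin m → ℝ)) (hS : MeasurableSet S)
    (hfin : ∫⁻ x in S, ENNReal.ofReal (f x) ≠ ∞) :
    ∫ x in S, f x ≤ (∫⁻ x in S, ENNReal.ofReal (f x)).toReal := by
  set fp : (Fin m → ℝ) → ℝ := fun x => max (f x) 0 with hfp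
  have hfpm : Measurable fp := hf.max measurable_const
  have hofReal : ∀ x, ENNReal.ofReal (f x) = ENNReal.ofReal (fp x) := by
    intro x
    rcases le_or_gt 0 (f x) with h | h
    · rw [hfp]; simp [max_eq_left h]
    · rw [hfp]; simp [max_eq_right h.le, ENNReal.ofReal_eq_zero.mpr h.le]
  have hlint : ∫⁻ x in S, ENNReal.ofReal (f x) = ∫⁻ x in S, ENNReal.ofReal (fp x) :=
    lintegral_congr fun x => hofReal x
  have hprop : (0 : (Fin m → ℝ) → ℝ) ≤ᵐ[volume.restrict S] fp :=
    Eventually.of_forall fun x => le_max_right (f x) 0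
  have hint : Integrable fp (volume.restrict S) := by
    refine ⟨hfpm.aestronglyMeasurable, ?_⟩
    rw [hasFiniteIntegral_iff_ofReal hprop]
    rw [← hlint]
    exact lt_of_le_of_ne le_top hfin
  have heq : ∫ x in S, fp x = (∫⁻ x in S, ENNReal.ofReal (f x)).toReal := by
    rw [hlint]
    rw [integral_eq_lintegral_of_nonneg_ae hprop hfpm.aestronglyMeasurable]
  by_cases hfi : Integrable f (volume.restrict S)
  · calc ∫ x in S, f x ≤ ∫ x in S, fp x :=
        integral_mono hfi hint fun x => le_max_left _ _
    _ = _ := heq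
  · rw [integral_undef hfi]
    exact ENNReal.toReal_nonneg

/-- Lemma 6.1(iii) of Etoré–Fort–Jourdain–Moulines, "On adaptive stratification":
bound for the optimal allocation `q*_i = p_i σ_i / ∑_j p_j σ_j`. -/
theorem stratified_variance_floor_bound_optimal_allocation
    {d m : ℕ} (hm : m < d)
    {Ω : Type*} [MeasurableSpace Ω] (P : Measure Ω) [IsProbabilityMeasure P]
    (Y : Ω → Fin d → ℝ) (hY : Measurable Y)
    (φ : (Fin d → ℝ) → ℝ) (hφ : Measurable φ)
    (hφsq : Integrable (fun ω => φ (Y ω) ^ 2) P)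
    (μ : Matrix (Fin d) (Fin m) ℝ) (hμ : μ.transpose * μ = 1)
    (f ς v : (Fin m → ℝ) → ℝ)
    (hf : Measurable f) (hς : Measurable ς) (hv : Measurable v)
    (hdens : ∀ S : Set (Fin m → ℝ), MeasurableSet S →
      P {ω | (fun k => ∑ j, μ j k * Y ω j) ∈ S} = ∫⁻ x in S, ENNReal.ofReal (f x))
    (hςf : ∀ S : Set (Fin m → ℝ), MeasurableSet S →
      ∫ x in S, ς x * f x = ∫ ω in {ω | (fun k => ∑ j, μ j k * Y ω j) ∈ S}, φ (Y ω) ∂P)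
    (hvf : ∀ S : Set (Fin m → ℝ), MeasurableSet S →
      ∫ x in S, v x * f x = ∫ ω in {ω | (fun k => ∑ j, μ j k * Y ω j) ∈ S}, φ (Y ω) ^ 2 ∂P)
    (g : Fin m → ℝ → ℝ) (hgm : ∀ k, Measurable (g k)) (hg0 : ∀ k x, 0 ≤ g k x)
    (hg1 : ∀ k, ∫ x, g k x = 1)
    (I M : ℕ) (hI : 0 < I) (hM : 0 < M)
    (hpos : 0 < ∑ j : Strat.Idx m I, Real.sqrt (Strat.p2σ2 f ς v g I j))
    (ε : ℝ) (hε : 1 < ε) :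
    |(M : ℝ) * Strat.stratVar f ς v g I
          (fun i => Real.sqrt (Strat.p2σ2 f ς v g I i) /
            ∑ j, Real.sqrt (Strat.p2σ2 f ς v g I j)) M -
        ∑ i, Strat.p2σ2 f ς v g I i /
          (Real.sqrt (Strat.p2σ2 f ς v g I i) / ∑ j, Real.sqrt (Strat.p2σ2 f ς v g I j))| ≤
      ((∫ ω, φ (Y ω) ^ 2 ∂P) - (∫ ω, φ (Y ω) ∂P) ^ 2) * ((1 + ε) * (I : ℝ) ^ m / (M : ℝ) + 1 / (ε - 1)) := by
  classical
  haveI hctb : Countable (Strat.Idx m I) := inferInstanceAs (Countable (Fin m → Fin I))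
  set a : Strat.Idx m I → ℝ := Strat.p2σ2 f ς v g I with ha
  set q : Strat.Idx m I → ℝ := fun i => Real.sqrt (a i) / ∑ j, Real.sqrt (a j) with hqdef
  -- the map T = μᵀY
  set TY : Ω → (Fin m → ℝ) := fun ω k => ∑ j, μ j k * Y ω j with hTY
  have hTm : Measurable TY := by
    apply measurable_pi_lambda
    intro k
    exact Finset.measurable_sum Finset.univ fun j _ =>
      ((measurable_pi_apply j).comp hY).const_mul (μ j k)
  -- strata and their preimages
  set A : Strat.Idx m I → Set Ω := fun i => {ω | (fun k => ∑ j, μ j k * Y ω j) ∈ Strat.stratum g I i}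
    with hA
  have hSm : ∀ i, MeasurableSet (Strat.stratum g I i) := Strat.stratum_measurable g I
  have hAm : ∀ i, MeasurableSet (A i) := fun i => hTm (hSm i)
  have hAdisj : Pairwise (Function.onFun Disjoint A) := by
    intro i j hij
    exact Set.disjoint_left.mpr fun ω hωi hωj =>
      Set.disjoint_left.mp (Strat.stratum_disjoint g I hij) hωi hωj
  -- integrability of φ ∘ Y
  have hφYm : Measurable fun ω => φ (Y ω) := hφ.comp hY
  have hφY1 : Integrable (fun ω => φ (Y ω)) P := by
    apply Integrable.mono' (hφsq.add (integrable_const 1)) hφYm.aestronglyMeasurable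
    filter_upwards with ω
    have h1 : |φ (Y ω)| ≤ φ (Y ω) ^ 2 + 1 := by nlinarith [sq_nonneg (|φ (Y ω)| - 1), sq_abs (φ (Y ω))]
    simpa using h1
  -- the three sequences over Option ι (none = complement)
  set AO : Option (Strat.Idx m I) → Set Ω := fun o => o.elim ((⋃ i, A i)ᶜ) A with hAO
  have hAOm : ∀ o, MeasurableSet (AO o) := by
    rintro (_ | i)
    · exact (MeasurableSet.iUnion hAm).compl
    · exact hAm i
  have hAOdisj : Pairwise (Function.onFun Disjoint AO) := by
    rintro (_ | i) (_ | j) hij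
    · exact absurd rfl hij
    · exact Set.disjoint_left.mpr fun ω hω hω' =>
        hω (Set.mem_iUnion.mpr ⟨j, hω'⟩)
    · exact (Set.disjoint_left.mpr fun ω hω hω' =>
        hω' (Set.mem_iUnion.mpr ⟨i, hω⟩))
    · exact hAdisj (fun h => hij (by rw [h]))
  have hAOcover : ⋃ o, AO o = Set.univ := by
    apply Set.eq_univ_of_forall
    intro ω
    by_cases h : ω ∈ ⋃ i, A i
    · obtain ⟨i, hi⟩ := Set.mem_iUnion.mp h
      exact Set.mem_iUnion.mpr ⟨some i, hi⟩
    · exact Set.mem_iUnion.mpr ⟨none, h⟩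
  set PO : Option (Strat.Idx m I) → ℝ := fun o => (P (AO o)).toReal with hPO
  set CO : Option (Strat.Idx m I) → ℝ := fun o => ∫ ω in AO o, φ (Y ω) ∂P with hCO
  set VO : Option (Strat.Idx m I) → ℝ := fun o => ∫ ω in AO o, φ (Y ω) ^ 2 ∂P with hVO
  have hPO0 : ∀ o, 0 ≤ PO o := fun o => ENNReal.toReal_nonneg
  have hVO0 : ∀ o, 0 ≤ VO o := fun o => integral_nonneg fun ω => sq_nonneg _
  have hCSO : ∀ o, CO o ^ 2 ≤ PO o * VO o := by
    intro o
    have := aux_int_cs (P.restrict (AO o)) (hφY1.restrict) (hφsq.restrict)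
    rwa [Measure.restrict_apply_univ] at this
  have hPO1 : ∑ o, PO o ≤ 1 := by
    have h1 : P (⋃ o, AO o) = ∑' o, P (AO o) := measure_iUnion hAOdisj hAOm
    rw [hAOcover, measure_univ, tsum_fintype] at h1
    have h2 : ∑ o, PO o = ((∑ o, P (AO o)) : ℝ≥0∞).toReal := by
      rw [ENNReal.toReal_sum]
      intro o _
      exact measure_ne_top _ _
    rw [h2, ← h1]
    simp
  have hCOsum : ∑ o, CO o = ∫ ω, φ (Y ω) ∂P := by
    have h1 : ∫ ω in ⋃ o, AO o, φ (Y ω) ∂P = ∑ o, ∫ ω in AO o, φ (Y ω) ∂P :=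
      integral_iUnion_fintype hAOm hAOdisj fun o => hφY1.integrableOn
    rw [hAOcover, Measure.restrict_univ] at h1
    exact h1.symm
  have hVOsum : ∑ o, VO o = ∫ ω, φ (Y ω) ^ 2 ∂P := by
    have h1 : ∫ ω in ⋃ o, AO o, φ (Y ω) ^ 2 ∂P = ∑ o, ∫ ω in AO o, φ (Y ω) ^ 2 ∂P :=
      integral_iUnion_fintype hAOm hAOdisj fun o => hφsq.integrableOn
    rw [hAOcover, Measure.restrict_univ] at h1
    exact h1.symm
  -- Cauchy-Schwarz over the partition
  have hCSmain : (∑ o, Real.sqrt (PO o * VO o - CO o ^ 2)) ^ 2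
      ≤ (∫ ω, φ (Y ω) ^ 2 ∂P) - (∫ ω, φ (Y ω) ∂P) ^ 2 := by
    have := aux_sqrt_sum_sq_le PO VO CO hPO0 hVO0 hCSO hPO1
    rwa [hVOsum, hCOsum] at this
  -- per-stratum comparison: √(a i) ≤ √(P_i V_i - C_i²)
  have hkey1 : ∀ i : Strat.Idx m I, Real.sqrt (a i) ≤ Real.sqrt (PO (some i) * VO (some i) - CO (some i) ^ 2) := by
    intro i
    apply Real.sqrt_le_sqrt
    have hai : a i = (∫ x in Strat.stratum g I i, f x) * VO (some i) - CO (some i) ^ 2 := by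
      rw [ha]
      show Strat.p2σ2 f ς v g I i = _
      rw [Strat.p2σ2, hvf _ (hSm i), hςf _ (hSm i)]
      rfl
    have hple : ∫ x in Strat.stratum g I i, f x ≤ PO (some i) := by
      have hfin : ∫⁻ x in Strat.stratum g I i, ENNReal.ofReal (f x) ≠ ∞ := by
        rw [← hdens _ (hSm i)]
        exact measure_ne_top _ _
      have h1 := aux_int_le_lint f hf _ (hSm i) hfin
      rw [← hdens _ (hSm i)] at h1
      exact h1
    rw [hai]
    have := hVO0 (some i)
    nlinarith [hVO0 (some i), hple]
  -- the total bound K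
  have hK : (∑ j, Real.sqrt (a j)) ^ 2 ≤ (∫ ω, φ (Y ω) ^ 2 ∂P) - (∫ ω, φ (Y ω) ∂P) ^ 2 := by
    have h1 : ∑ j, Real.sqrt (a j) ≤ ∑ i : Strat.Idx m I, Real.sqrt (PO (some i) * VO (some i) - CO (some i) ^ 2) :=
      Finset.sum_le_sum fun i _ => hkey1 i
    have h2 : ∑ i : Strat.Idx m I, Real.sqrt (PO (some i) * VO (some i) - CO (some i) ^ 2)
        ≤ ∑ o, Real.sqrt (PO o * VO o - CO o ^ 2) := by
      rw [univ_option, Finset.sum_insertNone]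
      exact le_add_of_nonneg_left (Real.sqrt_nonneg _)
    have h3 : 0 ≤ ∑ j, Real.sqrt (a j) := Finset.sum_nonneg fun j _ => Real.sqrt_nonneg _
    calc (∑ j, Real.sqrt (a j)) ^ 2 ≤ (∑ o, Real.sqrt (PO o * VO o - CO o ^ 2)) ^ 2 := by
          apply pow_le_pow_left₀ h3 (le_trans h1 h2)
      _ ≤ _ := hCSmain
  -- floor facts about Mdraw
  have hq0 : ∀ i, 0 ≤ q i := fun i =>
    div_nonneg (Real.sqrt_nonneg _) (Finset.sum_nonneg fun j _ => Real.sqrt_nonneg _)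
  have hsplit : ∀ i : Strat.Idx m I, (∑ j ∈ Finset.univ.filter (fun j => j ≤ i), q j)
      = (∑ j ∈ Finset.univ.filter (fun j => j < i), q j) + q i := by
    intro i
    have hins : Finset.univ.filter (fun j => j ≤ i)
        = insert i (Finset.univ.filter (fun j => j < i)) := by
      apply Finset.ext
      intro j
      rw [Finset.mem_insert, Finset.mem_filter, Finset.mem_filter]
      constructor
      · rintro ⟨-, h⟩
        rcases eq_or_lt_of_le h with h | h
        · exact Or.inl h
        · exact Or.inr ⟨Finset.mem_univ j, h⟩
      · rintro (rfl | ⟨-, h⟩)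
        · exact ⟨Finset.mem_univ j, le_refl j⟩
        · exact ⟨Finset.mem_univ j, le_of_lt h⟩
    rw [hins, Finset.sum_insert (by simp; exact lt_irrefl i)]
    ring
  set N : Strat.Idx m I → ℤ := Strat.Mdraw q M with hN
  have hN0 : ∀ i, 0 ≤ N i := by
    intro i
    rw [hN]
    unfold Strat.Mdraw
    rw [show @Finset.filter _ (fun j => j < i) (fun j => LinearOrder.toDecidableLT j i) Finset.univ = Finset.univ.filter (fun j => j < i) from Finset.filter_congr_decidable _ _ _]
    rw [sub_nonneg]
    apply Int.floor_le_floor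
    apply mul_le_mul_of_nonneg_left _ (Nat.cast_nonneg M)
    rw [hsplit i]
    linarith [hq0 i]
  have hNlb : ∀ i, (M : ℝ) * q i - 1 < (N i : ℝ) := by
    intro i
    rw [hN]
    unfold Strat.Mdraw
    rw [show @Finset.filter _ (fun j => j < i) (fun j => LinearOrder.toDecidableLT j i) Finset.univ = Finset.univ.filter (fun j => j < i) from Finset.filter_congr_decidable _ _ _]
    push_cast
    have h1 := Int.sub_one_lt_floor ((M : ℝ) * ∑ j ∈ Finset.univ.filter (fun j => j ≤ i), q j)
    have h2 := Int.floor_le ((M : ℝ) * ∑ j ∈ Finset.univ.filter (fun j => j < i), q j)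
    have h3 : (M : ℝ) * ∑ j ∈ Finset.univ.filter (fun j => j ≤ i), q j
        = (M : ℝ) * ∑ j ∈ Finset.univ.filter (fun j => j < i), q j + (M : ℝ) * q i := by
      rw [hsplit i]; ring
    linarith
  have hNub : ∀ i, (N i : ℝ) < (M : ℝ) * q i + 1 := by
    intro i
    rw [hN]
    unfold Strat.Mdraw
    rw [show @Finset.filter _ (fun j => j < i) (fun j => LinearOrder.toDecidableLT j i) Finset.univ = Finset.univ.filter (fun j => j < i) from Finset.filter_congr_decidable _ _ _]
    push_cast
    have h1 := Int.floor_le ((M : ℝ) * ∑ j ∈ Finset.univ.filter (fun j => j ≤ i), q j)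
    have h2 := Int.sub_one_lt_floor ((M : ℝ) * ∑ j ∈ Finset.univ.filter (fun j => j < i), q j)
    have h3 : (M : ℝ) * ∑ j ∈ Finset.univ.filter (fun j => j ≤ i), q j
        = (M : ℝ) * ∑ j ∈ Finset.univ.filter (fun j => j < i), q j + (M : ℝ) * q i := by
      rw [hsplit i]; ring
    linarith
  have hNq0 : ∀ i, q i = 0 → N i = 0 := by
    intro i hqi
    rw [hN]
    unfold Strat.Mdraw
    rw [show @Finset.filter _ (fun j => j < i) (fun j => LinearOrder.toDecidableLT j i) Finset.univ = Finset.univ.filter (fun j => j < i) from Finset.filter_congr_decidable _ _ _]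
    rw [sub_eq_zero]
    congr 1
    rw [hsplit i, hqi, add_zero]
  -- apply the arithmetic lemma
  have hcard : (Fintype.card (Strat.Idx m I) : ℝ) = (I : ℝ) ^ m := by
    have : Fintype.card (Strat.Idx m I) = I ^ m := by
      show Fintype.card (Fin m → Fin I) = I ^ m
      simp
    rw [this]
    push_cast
    rfl
  have hmain := key_arith a q N M hM ε _ hε hpos hK (fun i => rfl) hN0 hNlb hNub hNq0
  rw [hcard] at hmain
  have hSV : Strat.stratVar f ς v g I q M
      = ∑ i ∈ Finset.univ.filter (fun i => 0 < N i), ((N i : ℝ))⁻¹ * a i := rfl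
  calc |(M : ℝ) * Strat.stratVar f ς v g I q M - ∑ i, a i / q i|
      ≤ _ := by rw [hSV]; exact hmain
  _ = _ := rfl

end
end

section
/- Let h̃ : ℝ^m → ℝ be square integrable and vanish outside [0,1]^m. For a positive integer I and i = (i_1,…,i_m) ∈ {1,…,I}^m set J_i = ∏_{k=1}^m [(i_k−1)/I, i_k/I]. Then each term ∫_{J_i} h̃² dλ − I^m (∫_{J_i} h̃ dλ)² is nonnegative, and Σ_{i∈{1,…,I}^m} (∫_{J_i} h̃² dλ − I^m (∫_{J_i} h̃ dλ)²) ≤ (1/2) ∫_{[0,1]^m} ∫_{[−1,1]^m} (h̃(u) − h̃(u + z/I))² dz du; consequently the sum tends to 0 as I → ∞. -/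
open MeasureTheory Set Filter
open scoped Topology

noncomputable section

open scoped ENNReal

/-- The cube `J_i = ∏_k [(i_k - 1)/I, i_k/I]` of the uniform partition of `[0,1]^m`
(the value `j : Fin I` encodes `i_k = j + 1 ∈ {1, …, I}`). -/
def unifCube {m : ℕ} (I : ℕ) (i : Fin m → Fin I) : Set (Fin m → ℝ) :=
  Set.univ.pi fun k => Icc (((i k : ℕ) : ℝ) / I) ((((i k : ℕ) : ℝ) + 1) / I)

variable {m : ℕ}

lemma measurableSet_unifCube {I : ℕ} (i : Fin m → Fin I) : MeasurableSet (unifCube I i) :=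
  MeasurableSet.univ_pi fun _ => measurableSet_Icc

lemma volume_unifCube {I : ℕ} (hI : 0 < I) (i : Fin m → Fin I) :
    volume (unifCube I i) = (ENNReal.ofReal (1 / I)) ^ m := by
  have hI' : (I : ℝ) ≠ 0 := Nat.cast_ne_zero.2 hI.ne'
  rw [unifCube, volume_pi_pi]
  have : ∀ k : Fin m, volume (Icc (((i k : ℕ) : ℝ) / I) ((((i k : ℕ) : ℝ) + 1) / I))
      = ENNReal.ofReal (1 / I) := by
    intro k
    rw [Real.volume_Icc]
    congr 1
    field_simp
    ring
  simp [this]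

lemma volume_unifCube_toReal {I : ℕ} (hI : 0 < I) (i : Fin m → Fin I) :
    (volume (unifCube I i)).toReal = (1 / (I : ℝ)) ^ m := by
  rw [volume_unifCube hI i, ← ENNReal.ofReal_pow (by positivity), ENNReal.toReal_ofReal (by positivity)]

lemma volume_unifCube_lt_top {I : ℕ} (hI : 0 < I) (i : Fin m → Fin I) :
    volume (unifCube I i) < ∞ := by
  rw [volume_unifCube hI i]
  exact ENNReal.pow_lt_top ENNReal.ofReal_lt_top

lemma unifCube_subset {I : ℕ} (hI : 0 < I) (i : Fin m → Fin I) :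
    unifCube I i ⊆ Set.univ.pi (fun _ : Fin m => Icc (0:ℝ) 1) := by
  intro x hx k _
  have hk := hx k (mem_univ k)
  have h1 : (0:ℝ) ≤ ((i k : ℕ) : ℝ) / I := by positivity
  have h2 : (((i k : ℕ) : ℝ) + 1) / I ≤ 1 := by
    rw [div_le_one (by exact_mod_cast hI)]
    have : (i k : ℕ) + 1 ≤ I := (i k).2
    exact_mod_cast this
  exact ⟨h1.trans hk.1, hk.2.trans h2⟩

lemma iUnion_unifCube {I : ℕ} (hI : 0 < I) :
    (⋃ i : Fin m → Fin I, unifCube I i) = Set.univ.pi (fun _ : Fin m => Icc (0:ℝ) 1) := by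
  apply subset_antisymm
  · exact iUnion_subset fun i => unifCube_subset hI i
  · intro u hu
    have hI' : (0:ℝ) < I := by exact_mod_cast hI
    have key : ∀ k : Fin m, ∃ n : Fin I, ((n:ℕ):ℝ)/I ≤ u k ∧ u k ≤ (((n:ℕ):ℝ)+1)/I := by
      intro k
      have hk := hu k (mem_univ k)
      have h0 : 0 ≤ u k * I := mul_nonneg hk.1 hI'.le
      set n : ℕ := min (Nat.floor (u k * I)) (I - 1) with hn
      refine ⟨⟨n, by omega⟩, ?_, ?_⟩
      · have : (n:ℝ) ≤ u k * I := by
          calc (n:ℝ) ≤ (Nat.floor (u k * I) : ℝ) := by exact_mod_cast min_le_left _ _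
          _ ≤ u k * I := Nat.floor_le h0
        rw [div_le_iff₀ hI']
        simpa using this
      · have : u k * I ≤ (n:ℝ) + 1 := by
          rcases le_or_gt (Nat.floor (u k * I)) (I - 1) with hc | hc
          · have hn' : n = Nat.floor (u k * I) := by omega
            rw [hn']
            exact (Nat.lt_floor_add_one _).le
          · have hn' : n = I - 1 := by omega
            have : u k * I ≤ I := by
              calc u k * I ≤ 1 * I := by nlinarith [hk.2]
              _ = I := one_mul _
            rw [hn']
            have : ((I:ℝ)) ≤ ((I - 1 : ℕ) : ℝ) + 1 := by
              have : ((I - 1 : ℕ) : ℝ) = (I:ℝ) - 1 := by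
                have : (1:ℕ) ≤ I := hI
                push_cast [Nat.cast_sub this]
                ring
              linarith
            linarith
        rw [le_div_iff₀ hI']
        simpa [mul_comm] using this
    choose f hf using key
    exact mem_iUnion.2 ⟨f, fun k _ => ⟨(hf k).1, (hf k).2⟩⟩

lemma aedisjoint_unifCube {I : ℕ} (hI : 0 < I) :
    Pairwise (Function.onFun (AEDisjoint volume) fun i : Fin m → Fin I => unifCube I i) := by
  intro i j hij
  obtain ⟨k, hk⟩ := Function.ne_iff.1 hij
  have hI' : (0:ℝ) < I := by exact_mod_cast hI
  show volume _ = 0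
  simp only [Function.onFun]
  simp only [unifCube]
  rw [← pi_inter_distrib, volume_pi_pi]
  apply Finset.prod_eq_zero (Finset.mem_univ k)
  rw [Icc_inter_Icc, Real.volume_Icc, ENNReal.ofReal_eq_zero]
  have : ∀ a b : Fin I, (a:ℕ) < (b:ℕ) →
      min ((((a:ℕ):ℝ)+1)/I) ((((b:ℕ):ℝ)+1)/I) ≤ max (((a:ℕ):ℝ)/I) (((b:ℕ):ℝ)/I) := by
    intro a b hab
    have hab' : ((a:ℕ):ℝ) + 1 ≤ ((b:ℕ):ℝ) := by exact_mod_cast hab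
    have h1 : (((a:ℕ):ℝ)+1)/I ≤ ((b:ℕ):ℝ)/I := by gcongr
    exact (min_le_left _ _).trans (h1.trans (le_max_right _ _))
  rcases Nat.lt_or_ge (i k : ℕ) (j k : ℕ) with hc | hc
  · have := this (i k) (j k) hc
    linarith [this]
  · have hc' : (j k : ℕ) < (i k : ℕ) := by
      rcases Nat.lt_or_ge (j k :ℕ) (i k:ℕ) with h | h
      · exact h
      · exfalso; exact hk (Fin.ext (le_antisymm h hc))
    have := this (j k) (i k) hc'
    simp only [min_comm, max_comm] at *
    linarith [this]

variable {h : (Fin m → ℝ) → ℝ}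

lemma integrableOn_of_sq (hmeas : Measurable h) (hsq : Integrable (fun x => h x ^ 2))
    {s : Set (Fin m → ℝ)} (hfin : volume s < ∞) : IntegrableOn h s := by
  haveI : IsFiniteMeasure (volume.restrict s) :=
    ⟨by rwa [Measure.restrict_apply_univ]⟩
  have hb : Integrable (fun x => (h x ^ 2 + 1) / 2) (volume.restrict s) :=
    ((hsq.restrict).add (integrable_const 1)).div_const 2
  refine hb.mono' hmeas.aestronglyMeasurable (ae_of_all _ fun x => ?_)
  rw [Real.norm_eq_abs]
  nlinarith [sq_nonneg (|h x| - 1), sq_abs (h x)]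

lemma setIntegral_sub_sq (hmeas : Measurable h) (hsq : Integrable (fun x => h x ^ 2))
    {s : Set (Fin m → ℝ)} (hfin : volume s < ∞) (c : ℝ) :
    ∫ x in s, (h x - c)^2
      = (∫ x in s, h x ^ 2) - 2*c*(∫ x in s, h x) + c^2 * (volume s).toReal := by
  haveI : IsFiniteMeasure (volume.restrict s) :=
    ⟨by rwa [Measure.restrict_apply_univ]⟩
  have h1 : IntegrableOn h s := integrableOn_of_sq hmeas hsq hfin
  have h2 : IntegrableOn (fun x => h x ^ 2) s := hsq.integrableOn
  have he : ∀ x : Fin m → ℝ, (h x - c)^2 = h x ^ 2 - (2*c) * h x + c^2 := fun x => by ring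
  simp_rw [he]
  have hsub : IntegrableOn (fun x => h x ^ 2 - (2*c) * h x) s := h2.sub (h1.const_mul (2*c))
  have hmul : IntegrableOn (fun x => (2*c) * h x) s := h1.const_mul (2*c)
  rw [integral_add hsub (integrable_const _), integral_sub h2 hmul,
    integral_const_mul, setIntegral_const, smul_eq_mul, measureReal_def]
  ring

lemma term_eq (hmeas : Measurable h) (hsq : Integrable (fun x => h x ^ 2))
    {I : ℕ} (hI : 0 < I) (i : Fin m → Fin I) :
    (∫ x in unifCube I i, h x ^ 2) - (I : ℝ) ^ m * (∫ x in unifCube I i, h x) ^ 2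
      = ∫ x in unifCube I i, (h x - (I:ℝ)^m * ∫ y in unifCube I i, h y)^2 := by
  have hI' : (I : ℝ) ≠ 0 := Nat.cast_ne_zero.2 hI.ne'
  have key := setIntegral_sub_sq hmeas hsq (volume_unifCube_lt_top hI i)
    ((I:ℝ)^m * ∫ y in unifCube I i, h y)
  rw [key, volume_unifCube_toReal hI i]
  have hIm : ((1:ℝ)/(I:ℝ))^m * (I:ℝ)^m = 1 := by
    rw [← mul_pow]; field_simp; exact one_pow m
  set A := ∫ y in unifCube I i, h y
  have : ((I:ℝ)^m * A)^2 * ((1:ℝ)/(I:ℝ))^m = (I:ℝ)^m * A^2 := by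
    have : ((I:ℝ)^m * A)^2 * ((1:ℝ)/(I:ℝ))^m
        = ((I:ℝ)^m * A^2) * (((1:ℝ)/(I:ℝ))^m * (I:ℝ)^m) := by ring
    rw [this, hIm, mul_one]
  rw [this]; ring

lemma term_nonneg (hmeas : Measurable h) (hsq : Integrable (fun x => h x ^ 2))
    {I : ℕ} (hI : 0 < I) (i : Fin m → Fin I) :
    0 ≤ (∫ x in unifCube I i, h x ^ 2) - (I : ℝ) ^ m * (∫ x in unifCube I i, h x) ^ 2 := by
  rw [term_eq hmeas hsq hI i]
  exact setIntegral_nonneg (measurableSet_unifCube i) fun x _ => sq_nonneg _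

def cubeZ (m : ℕ) : Set (Fin m → ℝ) := Set.univ.pi fun _ : Fin m => Icc (-1:ℝ) 1

lemma measurableSet_cubeZ : MeasurableSet (cubeZ m) :=
  MeasurableSet.univ_pi fun _ => measurableSet_Icc

lemma volume_cubeZ_lt_top : volume (cubeZ m) < ∞ := by
  rw [cubeZ, volume_pi_pi]
  simp only [Real.volume_Icc]
  exact ENNReal.prod_lt_top fun _ _ => ENNReal.ofReal_lt_top

lemma integral_comp_affine (g : (Fin m → ℝ) → ℝ) {I : ℕ} (hI : 0 < I) (u : Fin m → ℝ) :
    ∫ z, g (u + (I:ℝ)⁻¹ • z) = (I:ℝ)^m * ∫ x, g x := by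
  have h1 : ∫ z, g (u + (I:ℝ)⁻¹ • z) = ∫ z, (fun x => g (u + x)) ((I:ℝ)⁻¹ • z) := rfl
  rw [h1, MeasureTheory.Measure.integral_comp_inv_smul volume (fun x => g (u + x)) (I:ℝ),
    integral_add_left_eq_self]
  have : Module.finrank ℝ (Fin m → ℝ) = m := by simp
  rw [this, abs_of_nonneg (by positivity), smul_eq_mul]

lemma setIntegral_comp_affine (g : (Fin m → ℝ) → ℝ) {I : ℕ} (hI : 0 < I) (u : Fin m → ℝ)
    {s : Set (Fin m → ℝ)} (hs : MeasurableSet s) :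
    ∫ z in (fun z : Fin m → ℝ => u + (I:ℝ)⁻¹ • z) ⁻¹' s, g (u + (I:ℝ)⁻¹ • z)
      = (I:ℝ)^m * ∫ x in s, g x := by
  have hφ : Measurable (fun z : Fin m → ℝ => u + (I:ℝ)⁻¹ • z) :=
    by fun_prop
  rw [← integral_indicator (hφ hs), ← integral_indicator hs]
  have : ∀ z, ((fun z : Fin m → ℝ => u + (I:ℝ)⁻¹ • z) ⁻¹' s).indicator
      (fun z => g (u + (I:ℝ)⁻¹ • z)) z = (s.indicator g) (u + (I:ℝ)⁻¹ • z) := by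
    intro z
    exact Set.indicator_comp_right (fun z : Fin m → ℝ => u + (I:ℝ)⁻¹ • z) (g := g)
  simp_rw [this]
  exact integral_comp_affine (s.indicator g) hI u

lemma integrable_translate_sq (hmeas : Measurable h) (hsq : Integrable (fun x => h x ^ 2))
    (u : Fin m → ℝ) {c : ℝ} (hc : c ≠ 0) :
    Integrable (fun z : Fin m → ℝ => h (u + c • z) ^ 2) := by
  have htr : Integrable (fun x : Fin m → ℝ => h (u + x) ^ 2) := by
    have := (measurePreserving_add_left volume u).integrable_comp
      (g := fun x => h x ^ 2) hsq.aestronglyMeasurable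
    exact this.2 hsq
  exact (integrable_comp_smul_iff volume (fun x : Fin m → ℝ => h (u + x) ^ 2) hc).2 htr

lemma integrable_Gu (hmeas : Measurable h) (hsq : Integrable (fun x => h x ^ 2))
    {I : ℕ} (hI : 0 < I) (u : Fin m → ℝ) :
    IntegrableOn (fun z : Fin m → ℝ => (h u - h (u + (I:ℝ)⁻¹ • z))^2) (cubeZ m) := by
  have hc : ((I:ℝ)⁻¹ : ℝ) ≠ 0 := by
    simp [Nat.cast_ne_zero.2 hI.ne']
  haveI : IsFiniteMeasure (volume.restrict (cubeZ m)) :=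
    ⟨by rw [Measure.restrict_apply_univ]; exact volume_cubeZ_lt_top⟩
  have hcs : Integrable (fun z : Fin m → ℝ => h (u + (I:ℝ)⁻¹ • z) ^ 2) :=
    integrable_translate_sq hmeas hsq u hc
  have hφ : Measurable (fun z : Fin m → ℝ => u + (I:ℝ)⁻¹ • z) := by fun_prop
  have hB : IntegrableOn (fun z : Fin m → ℝ => 2*(h u)^2 + 2*h (u + (I:ℝ)⁻¹ • z)^2) (cubeZ m) :=
    (integrable_const _).add ((hcs.restrict).const_mul 2)
  refine hB.mono' ((measurable_const.sub (hmeas.comp hφ)).pow_const 2).aestronglyMeasurable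
    (ae_of_all _ fun z => ?_)
  rw [Real.norm_eq_abs, abs_of_nonneg (sq_nonneg _)]
  nlinarith [sq_nonneg (h u + h (u + (I:ℝ)⁻¹ • z))]

lemma preimage_subset_cubeZ {I : ℕ} (hI : 0 < I) {i : Fin m → Fin I} {u : Fin m → ℝ}
    (hu : u ∈ unifCube I i) :
    (fun z : Fin m → ℝ => u + (I:ℝ)⁻¹ • z) ⁻¹' (unifCube I i) ⊆ cubeZ m := by
  intro z hz k _
  have hI' : (0:ℝ) < I := by exact_mod_cast hI
  have h1 := hu k (mem_univ k)
  have h2 := hz k (mem_univ k)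
  simp only [Pi.add_apply, Pi.smul_apply, smul_eq_mul] at h2
  obtain ⟨h1a, h1b⟩ := h1
  obtain ⟨h2a, h2b⟩ := h2
  have hr1 : ((((i k):ℕ):ℝ))/I - ((((i k):ℕ):ℝ)+1)/I = -1/I := by ring
  have hr2 : ((((i k):ℕ):ℝ)+1)/I - ((((i k):ℕ):ℝ))/I = 1/I := by ring
  have key1 : (-1:ℝ)/I ≤ (I:ℝ)⁻¹ * z k := by linarith
  have key2 : (I:ℝ)⁻¹ * z k ≤ 1/I := by linarith
  constructor
  · calc (-1:ℝ) = (I:ℝ) * (-1/I) := by field_simp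
      _ ≤ (I:ℝ) * ((I:ℝ)⁻¹ * z k) := mul_le_mul_of_nonneg_left key1 hI'.le
      _ = z k := by field_simp
  · calc z k = (I:ℝ) * ((I:ℝ)⁻¹ * z k) := by field_simp
      _ ≤ (I:ℝ) * (1/I) := mul_le_mul_of_nonneg_left key2 hI'.le
      _ = 1 := by field_simp

lemma inner_cov (hmeas : Measurable h) (hsq : Integrable (fun x => h x ^ 2))
    {I : ℕ} (hI : 0 < I) (i : Fin m → Fin I) {u : Fin m → ℝ} (hu : u ∈ unifCube I i) :
    (I:ℝ)^m * ∫ v in unifCube I i, (h u - h v)^2 ≤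
      ∫ z in cubeZ m, (h u - h (u + (I:ℝ)⁻¹ • z))^2 := by
  rw [← setIntegral_comp_affine (fun v => (h u - h v)^2) hI u (measurableSet_unifCube i)]
  exact setIntegral_mono_set (integrable_Gu hmeas hsq hI u)
    (ae_of_all _ fun z => sq_nonneg _)
    ((preimage_subset_cubeZ hI hu).eventuallyLE)

def cubeU (m : ℕ) : Set (Fin m → ℝ) := Set.univ.pi fun _ : Fin m => Icc (0:ℝ) 1

lemma measurableSet_cubeU : MeasurableSet (cubeU m) :=
  MeasurableSet.univ_pi fun _ => measurableSet_Icc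

lemma volume_cubeU_lt_top : volume (cubeU m) < ∞ := by
  rw [cubeU, volume_pi_pi]
  simp only [Real.volume_Icc]
  exact ENNReal.prod_lt_top fun _ _ => ENNReal.ofReal_lt_top

/-- The inner integral function. -/
def KK (h : (Fin m → ℝ) → ℝ) (I : ℕ) (u : Fin m → ℝ) : ℝ :=
  ∫ z in cubeZ m, (h u - h (u + (I:ℝ)⁻¹ • z))^2

lemma KK_nonneg (I : ℕ) (u : Fin m → ℝ) : 0 ≤ KK h I u :=
  setIntegral_nonneg measurableSet_cubeZ fun _ _ => sq_nonneg _

lemma KK_stronglyMeasurable (hmeas : Measurable h) (I : ℕ) :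
    StronglyMeasurable (KK h I) := by
  have : Measurable (fun p : (Fin m → ℝ) × (Fin m → ℝ) => (h p.1 - h (p.1 + (I:ℝ)⁻¹ • p.2))^2) := by
    fun_prop
  exact this.stronglyMeasurable.integral_prod_right'

lemma KK_le (hmeas : Measurable h) (hsq : Integrable (fun x => h x ^ 2))
    {I : ℕ} (hI : 0 < I) (u : Fin m → ℝ) :
    KK h I u ≤ (volume (cubeZ m)).toReal * (2*(h u)^2) + 2*((I:ℝ)^m * ∫ x, h x ^ 2) := by
  have hc : ((I:ℝ)⁻¹ : ℝ) ≠ 0 := by simp [Nat.cast_ne_zero.2 hI.ne']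
  haveI : IsFiniteMeasure (volume.restrict (cubeZ m)) :=
    ⟨by rw [Measure.restrict_apply_univ]; exact volume_cubeZ_lt_top⟩
  have hcs : Integrable (fun z : Fin m → ℝ => h (u + (I:ℝ)⁻¹ • z) ^ 2) :=
    integrable_translate_sq hmeas hsq u hc
  have hB : IntegrableOn (fun z : Fin m → ℝ => 2*(h u)^2 + 2*h (u + (I:ℝ)⁻¹ • z)^2) (cubeZ m) :=
    (integrable_const _).add ((hcs.restrict).const_mul 2)
  have step1 : KK h I u ≤ ∫ z in cubeZ m, (2*(h u)^2 + 2*h (u + (I:ℝ)⁻¹ • z)^2) := by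
    refine setIntegral_mono_on (integrable_Gu hmeas hsq hI u) hB measurableSet_cubeZ
      fun z _ => ?_
    nlinarith [sq_nonneg (h u + h (u + (I:ℝ)⁻¹ • z))]
  have step2 : ∫ z in cubeZ m, (2*(h u)^2 + 2*h (u + (I:ℝ)⁻¹ • z)^2)
      = (volume (cubeZ m)).toReal * (2*(h u)^2) + 2 * ∫ z in cubeZ m, h (u + (I:ℝ)⁻¹ • z)^2 := by
    rw [integral_add (integrable_const _) ((hcs.restrict).const_mul 2), setIntegral_const,
      smul_eq_mul, integral_const_mul, measureReal_def]
  have step3 : ∫ z in cubeZ m, h (u + (I:ℝ)⁻¹ • z)^2 ≤ (I:ℝ)^m * ∫ x, h x ^ 2 := by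
    rw [← integral_comp_affine (fun x => h x ^ 2) hI u]
    exact setIntegral_le_integral hcs (ae_of_all _ fun z => sq_nonneg _)
  calc KK h I u ≤ _ := step1
    _ = _ := step2
    _ ≤ _ := by linarith

lemma KK_integrableOn (hmeas : Measurable h) (hsq : Integrable (fun x => h x ^ 2))
    {I : ℕ} (hI : 0 < I) : IntegrableOn (KK h I) (cubeU m) := by
  haveI : IsFiniteMeasure (volume.restrict (cubeU m)) :=
    ⟨by rw [Measure.restrict_apply_univ]; exact volume_cubeU_lt_top⟩
  have hB : IntegrableOn
      (fun u => (volume (cubeZ m)).toReal * (2*(h u)^2) + 2*((I:ℝ)^m * ∫ x, h x ^ 2))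
      (cubeU m) := by
    refine Integrable.add ?_ (integrable_const _)
    have : IntegrableOn (fun u => (h u)^2) (cubeU m) := hsq.integrableOn
    simpa [mul_assoc] using (this.const_mul ((volume (cubeZ m)).toReal * 2))
  refine hB.mono' (KK_stronglyMeasurable hmeas I).aestronglyMeasurable (ae_of_all _ fun u => ?_)
  rw [Real.norm_eq_abs, abs_of_nonneg (KK_nonneg I u)]
  exact KK_le hmeas hsq hI u

lemma term_le_cube (hmeas : Measurable h) (hsq : Integrable (fun x => h x ^ 2))
    {I : ℕ} (hI : 0 < I) (i : Fin m → Fin I) :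
    (∫ x in unifCube I i, h x ^ 2) - (I : ℝ) ^ m * (∫ x in unifCube I i, h x) ^ 2
      ≤ 1/2 * ∫ u in unifCube I i, KK h I u := by
  have hI' : (I : ℝ) ≠ 0 := Nat.cast_ne_zero.2 hI.ne'
  set J := unifCube I i with hJ
  have hJm : MeasurableSet J := measurableSet_unifCube i
  have hJfin : volume J < ∞ := volume_unifCube_lt_top hI i
  haveI : IsFiniteMeasure (volume.restrict J) :=
    ⟨by rw [Measure.restrict_apply_univ]; exact hJfin⟩
  set A := ∫ y in J, h y with hA
  set B := ∫ y in J, h y ^ 2 with hB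
  set V := ((1:ℝ)/(I:ℝ))^m with hV
  have hIm : V * (I:ℝ)^m = 1 := by rw [hV, ← mul_pow]; field_simp; exact one_pow m
  have h1 : IntegrableOn h J := integrableOn_of_sq hmeas hsq hJfin
  have h2 : IntegrableOn (fun x => h x ^ 2) J := hsq.integrableOn
  -- inner expansion
  have hLrep : ∀ u : Fin m → ℝ, ∫ v in J, (h u - h v)^2 = B - 2*h u*A + (h u)^2*V := by
    intro u
    have : ∀ v, (h u - h v)^2 = (h v - h u)^2 := fun v => by ring
    simp_rw [this]
    rw [setIntegral_sub_sq hmeas hsq hJfin (h u), volume_unifCube_toReal hI i]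
  -- pointwise bound on J
  have hpt : ∀ u ∈ J, (I:ℝ)^m * B - (2*(I:ℝ)^m*A) * h u + ((I:ℝ)^m*V) * (h u)^2 ≤ KK h I u := by
    intro u hu
    have := inner_cov hmeas hsq hI i hu
    rw [hLrep u] at this
    calc (I:ℝ)^m * B - (2*(I:ℝ)^m*A) * h u + ((I:ℝ)^m*V) * (h u)^2
        = (I:ℝ)^m * (B - 2*h u*A + (h u)^2*V) := by ring
      _ ≤ KK h I u := this
  -- integrability of LHS
  have hL : IntegrableOn
      (fun u => (I:ℝ)^m * B - (2*(I:ℝ)^m*A) * h u + ((I:ℝ)^m*V) * (h u)^2) J := by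
    exact ((integrable_const _).sub (h1.const_mul _)).add (h2.const_mul _)
  have hKJ : IntegrableOn (KK h I) J :=
    (KK_integrableOn hmeas hsq hI).mono_set (unifCube_subset hI i)
  have hmono := setIntegral_mono_on hL hKJ hJm hpt
  -- compute LHS integral
  have hcomp : ∫ u in J, ((I:ℝ)^m * B - (2*(I:ℝ)^m*A) * h u + ((I:ℝ)^m*V) * (h u)^2)
      = 2*B - 2*(I:ℝ)^m * A^2 := by
    have ia : IntegrableOn (fun u => 2*(I:ℝ)^m*A * h u) J := h1.const_mul _
    have ib : IntegrableOn (fun u => (I:ℝ)^m * B - 2*(I:ℝ)^m*A * h u) J :=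
      (integrable_const _).sub ia
    have ic : IntegrableOn (fun u => (I:ℝ)^m*V * (h u)^2) J := h2.const_mul _
    rw [integral_add ib ic, integral_sub (integrable_const _) ia, setIntegral_const, smul_eq_mul,
      integral_const_mul, integral_const_mul, ← hA, ← hB, measureReal_def, volume_unifCube_toReal hI i, ← hV]
    linear_combination (2*B) * hIm
  rw [hcomp] at hmono
  linarith

lemma sum_term_le (hmeas : Measurable h) (hsq : Integrable (fun x => h x ^ 2))
    {I : ℕ} (hI : 0 < I) :
    ∑ i : Fin m → Fin I,
        ((∫ x in unifCube I i, h x ^ 2) - (I : ℝ) ^ m * (∫ x in unifCube I i, h x) ^ 2)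
      ≤ 1/2 * ∫ u in cubeU m, KK h I u := by
  calc ∑ i : Fin m → Fin I,
        ((∫ x in unifCube I i, h x ^ 2) - (I : ℝ) ^ m * (∫ x in unifCube I i, h x) ^ 2)
      ≤ ∑ i : Fin m → Fin I, 1/2 * ∫ u in unifCube I i, KK h I u :=
        Finset.sum_le_sum fun i _ => term_le_cube hmeas hsq hI i
    _ = 1/2 * ∑ i : Fin m → Fin I, ∫ u in unifCube I i, KK h I u := by
        rw [Finset.mul_sum]
    _ = 1/2 * ∫ u in cubeU m, KK h I u := by
        congr 1
        have hu : (⋃ i : Fin m → Fin I, unifCube I i) = cubeU m := iUnion_unifCube hI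
        rw [show (cubeU m : Set (Fin m → ℝ)) = ⋃ i : Fin m → Fin I, unifCube I i from hu.symm,
          integral_iUnion_ae (fun i => (measurableSet_unifCube i).nullMeasurableSet)
            (aedisjoint_unifCube hI)
            (by rw [hu]; exact KK_integrableOn hmeas hsq hI), tsum_fintype]

lemma memL2 (hmeas : Measurable h) (hsq : Integrable (fun x => h x ^ 2)) :
    MemLp h 2 volume :=
  (memLp_two_iff_integrable_sq hmeas.aestronglyMeasurable).2 hsq

lemma memL2_translate (hmeas : Measurable h) (hsq : Integrable (fun x => h x ^ 2))
    (v : Fin m → ℝ) : MemLp (fun u => h (u + v)) 2 volume :=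
  (memL2 hmeas hsq).comp_measurePreserving (measurePreserving_add_right volume v)

lemma diff_sq_integrable (hmeas : Measurable h) (hsq : Integrable (fun x => h x ^ 2))
    (v : Fin m → ℝ) : Integrable (fun u => (h u - h (u + v))^2) := by
  have hsub : MemLp (fun u => h u - h (u + v)) 2 volume :=
    (memL2 hmeas hsq).sub (memL2_translate hmeas hsq v)
  have hm : Measurable (fun u : Fin m → ℝ => h u - h (u + v)) := by fun_prop
  exact (memLp_two_iff_integrable_sq hm.aestronglyMeasurable).1 hsub

lemma full_le (hmeas : Measurable h) (hsq : Integrable (fun x => h x ^ 2))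
    (v : Fin m → ℝ) :
    ∫ u, (h u - h (u + v))^2 ≤ 4 * ∫ x, h x ^ 2 := by
  have htr : Integrable (fun u : Fin m → ℝ => h (u + v) ^ 2) := by
    have := (measurePreserving_add_right volume v).integrable_comp
      (g := fun x => h x ^ 2) hsq.aestronglyMeasurable
    exact this.2 hsq
  have hB : Integrable (fun u : Fin m → ℝ => 2*(h u)^2 + 2*(h (u + v))^2) :=
    (hsq.const_mul 2).add (htr.const_mul 2)
  have step1 : ∫ u, (h u - h (u + v))^2 ≤ ∫ u, (2*(h u)^2 + 2*(h (u + v))^2) := by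
    refine integral_mono (diff_sq_integrable hmeas hsq v) hB fun u => ?_
    nlinarith [sq_nonneg (h u + h (u + v))]
  have step2 : ∫ u, (2*(h u)^2 + 2*(h (u + v))^2)
      = 2 * (∫ x, h x ^ 2) + 2 * ∫ u, h (u + v)^2 := by
    rw [integral_add (hsq.const_mul 2) (htr.const_mul 2), integral_const_mul, integral_const_mul]
  have step3 : ∫ u, h (u + v)^2 = ∫ x, h x ^ 2 :=
    integral_add_right_eq_self (fun x => h x ^ 2) v
  rw [step2, step3] at step1
  linarith

lemma integral_sq_eq_norm (hmeas : Measurable h) (hsq : Integrable (fun x => h x ^ 2))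
    (v : Fin m → ℝ) :
    haveI : Fact ((1:ℝ≥0∞) ≤ 2) := ⟨one_le_two⟩
    ∫ u, (h u - h (u + v))^2
      = ‖(memL2 hmeas hsq).toLp h - Lp.compMeasurePreserving (fun x => x + v)
          (measurePreserving_add_right volume v) ((memL2 hmeas hsq).toLp h)‖^2 := by
  haveI : Fact ((1:ℝ≥0∞) ≤ 2) := ⟨one_le_two⟩
  set H := (memL2 hmeas hsq).toLp h with hH
  set T := Lp.compMeasurePreserving (fun x : Fin m → ℝ => x + v)
    (measurePreserving_add_right volume v) H with hT
  have hae : (fun u => h u - h (u + v)) =ᶠ[ae volume] fun u => ((H - T : Lp ℝ 2 volume) : (Fin m → ℝ) → ℝ) u := by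
    have h1 : ((H : (Fin m → ℝ) → ℝ)) =ᶠ[ae volume] h := (memL2 hmeas hsq).coeFn_toLp
    have h2 : ((T : (Fin m → ℝ) → ℝ)) =ᶠ[ae volume] (fun u => h (u + v)) := by
      refine (Lp.coeFn_compMeasurePreserving H
        (measurePreserving_add_right volume v)).trans ?_
      exact (measurePreserving_add_right volume v).quasiMeasurePreserving.ae_eq_comp h1
    filter_upwards [Lp.coeFn_sub H T, h1, h2] with u e1 e2 e3
    rw [e1, Pi.sub_apply, e2, e3]
  have : ∫ u, (h u - h (u + v))^2 = ∫ u, (((H - T : Lp ℝ 2 volume) : (Fin m → ℝ) → ℝ) u)^2 := by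
    refine integral_congr_ae ?_
    filter_upwards [hae] with u e
    rw [e]
  rw [this]
  have hinner : (inner ℝ (H - T) (H - T) : ℝ) = ∫ u, (((H - T : Lp ℝ 2 volume) : (Fin m → ℝ) → ℝ) u)^2 := by
    rw [L2.inner_def]
    refine integral_congr_ae (ae_of_all _ fun u => ?_)
    simp [RCLike.inner_apply, starRingEnd_apply, sq]
  rw [← hinner, real_inner_self_eq_norm_sq]

lemma tendsto_D (hmeas : Measurable h) (hsq : Integrable (fun x => h x ^ 2))
    (z : Fin m → ℝ) :
    Tendsto (fun I : ℕ => ∫ u, (h u - h (u + (I:ℝ)⁻¹ • z))^2) atTop (𝓝 0) := by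
  haveI : Fact ((1:ℝ≥0∞) ≤ 2) := ⟨one_le_two⟩
  set H := (memL2 hmeas hsq).toLp h with hH
  -- continuous family of translations
  set τ : (Fin m → ℝ) → C(Fin m → ℝ, Fin m → ℝ) :=
    fun v => ⟨fun x => x + v, by continuity⟩ with hτ
  have hτc : Continuous τ := by
    apply ContinuousMap.continuous_of_continuous_uncurry
    exact continuous_snd.add continuous_fst
  have hMP : ∀ v : Fin m → ℝ, MeasurePreserving (τ v) volume volume :=
    fun v => measurePreserving_add_right volume v
  have hTc : Continuous fun v : Fin m → ℝ =>
      Lp.compMeasurePreserving (τ v) (hMP v) H := by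
    exact Continuous.compMeasurePreservingLp continuous_const hτc hMP (by norm_num)
  have hT0 : Lp.compMeasurePreserving (τ 0) (hMP 0) H = H := by
    apply Lp.ext
    refine (Lp.coeFn_compMeasurePreserving H (hMP 0)).trans ?_
    have : ((H : (Fin m → ℝ) → ℝ)) ∘ (τ 0) = (H : (Fin m → ℝ) → ℝ) := by
      funext x
      simp [hτ]
    rw [this]
  have hv : Tendsto (fun I : ℕ => (I:ℝ)⁻¹ • z) atTop (𝓝 0) := by
    have := (tendsto_inv_atTop_nhds_zero_nat (𝕜 := ℝ)).smul_const z
    simpa using this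
  have hcomp : Tendsto (fun I : ℕ => Lp.compMeasurePreserving (τ ((I:ℝ)⁻¹ • z))
      (hMP _) H) atTop (𝓝 H) := by
    have := (hTc.tendsto 0).comp hv
    rwa [hT0] at this
  have hnorm : Tendsto (fun I : ℕ => ‖H - Lp.compMeasurePreserving (τ ((I:ℝ)⁻¹ • z))
      (hMP _) H‖^2) atTop (𝓝 0) := by
    have hc : Tendsto (fun I : ℕ => H - Lp.compMeasurePreserving (τ ((I:ℝ)⁻¹ • z))
        (hMP _) H) atTop (𝓝 (H - H)) := tendsto_const_nhds.sub hcomp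
    rw [sub_self] at hc
    have := (hc.norm.pow 2)
    simpa using this
  refine hnorm.congr fun I => ?_
  exact (integral_sq_eq_norm hmeas hsq ((I:ℝ)⁻¹ • z)).symm

lemma tendsto_Phi (hmeas : Measurable h) (hsq : Integrable (fun x => h x ^ 2))
    (z : Fin m → ℝ) :
    Tendsto (fun I : ℕ => ∫ u in cubeU m, (h u - h (u + (I:ℝ)⁻¹ • z))^2) atTop (𝓝 0) := by
  refine squeeze_zero (fun I => setIntegral_nonneg measurableSet_cubeU fun u _ => sq_nonneg _)
    (fun I => ?_) (tendsto_D hmeas hsq z)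
  exact setIntegral_le_integral (diff_sq_integrable hmeas hsq _)
    (ae_of_all _ fun u => sq_nonneg _)

lemma integrable_prod_G (hmeas : Measurable h) (hsq : Integrable (fun x => h x ^ 2))
    {I : ℕ} (hI : 0 < I) :
    Integrable (fun p : (Fin m → ℝ) × (Fin m → ℝ) => (h p.1 - h (p.1 + (I:ℝ)⁻¹ • p.2))^2)
      ((volume.restrict (cubeU m)).prod (volume.restrict (cubeZ m))) := by
  have hmG : Measurable
      (fun p : (Fin m → ℝ) × (Fin m → ℝ) => (h p.1 - h (p.1 + (I:ℝ)⁻¹ • p.2))^2) := by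
    fun_prop
  rw [integrable_prod_iff hmG.aestronglyMeasurable]
  refine ⟨ae_of_all _ fun u => integrable_Gu hmeas hsq hI u, ?_⟩
  have : ∀ u : Fin m → ℝ, (∫ z in cubeZ m, ‖(h u - h (u + (I:ℝ)⁻¹ • z))^2‖) = KK h I u := by
    intro u
    simp_rw [Real.norm_eq_abs, abs_pow, sq_abs]
    rfl
  simp_rw [this]
  exact KK_integrableOn hmeas hsq hI

lemma swap_KK (hmeas : Measurable h) (hsq : Integrable (fun x => h x ^ 2))
    {I : ℕ} (hI : 0 < I) :
    ∫ u in cubeU m, KK h I u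
      = ∫ z in cubeZ m, ∫ u in cubeU m, (h u - h (u + (I:ℝ)⁻¹ • z))^2 := by
  exact integral_integral_swap (integrable_prod_G hmeas hsq hI)

lemma tendsto_int_KK (hmeas : Measurable h) (hsq : Integrable (fun x => h x ^ 2)) :
    Tendsto (fun I : ℕ => ∫ z in cubeZ m, ∫ u in cubeU m, (h u - h (u + (I:ℝ)⁻¹ • z))^2)
      atTop (𝓝 0) := by
  haveI : IsFiniteMeasure (volume.restrict (cubeZ m)) :=
    ⟨by rw [Measure.restrict_apply_univ]; exact volume_cubeZ_lt_top⟩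
  have key := tendsto_integral_of_dominated_convergence
    (μ := volume.restrict (cubeZ m))
    (F := fun I : ℕ => fun z => ∫ u in cubeU m, (h u - h (u + (I:ℝ)⁻¹ • z))^2)
    (f := fun _ => (0:ℝ)) (bound := fun _ => 4 * ∫ x, h x ^ 2)
    (fun I => by
      have : Measurable (fun p : (Fin m → ℝ) × (Fin m → ℝ) =>
          (h p.2 - h (p.2 + (I:ℝ)⁻¹ • p.1))^2) := by fun_prop
      exact (this.stronglyMeasurable.integral_prod_right').aestronglyMeasurable.restrict)
    (integrable_const _)
    (fun I => ae_of_all _ fun z => by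
      rw [Real.norm_eq_abs, abs_of_nonneg (setIntegral_nonneg measurableSet_cubeU
        fun u _ => sq_nonneg _)]
      calc ∫ u in cubeU m, (h u - h (u + (I:ℝ)⁻¹ • z))^2
          ≤ ∫ u, (h u - h (u + (I:ℝ)⁻¹ • z))^2 :=
            setIntegral_le_integral (diff_sq_integrable hmeas hsq _)
              (ae_of_all _ fun u => sq_nonneg _)
        _ ≤ 4 * ∫ x, h x ^ 2 := full_le hmeas hsq _)
    (ae_of_all _ fun z => tendsto_Phi hmeas hsq z)
  simpa using key

lemma form_eq (hmeas : Measurable h) (I : ℕ) :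
    (∫ u in Set.univ.pi (fun _ : Fin m => Icc (0 : ℝ) 1),
        ∫ z in Set.univ.pi (fun _ : Fin m => Icc (-1 : ℝ) 1),
          (h u - h (fun k => u k + z k / I)) ^ 2)
      = ∫ u in cubeU m, KK h I u := by
  have haff : ∀ u z : Fin m → ℝ, (fun k => u k + z k / (I:ℕ)) = u + (I:ℝ)⁻¹ • z := by
    intro u z
    funext k
    simp [div_eq_inv_mul]
  show (∫ u in cubeU m, ∫ z in cubeZ m, (h u - h (fun k => u k + z k / I)) ^ 2) = _
  simp_rw [haff]
  rfl

/-- Key approximation estimate (proof of Lemma 6.3 in Etoré–Fort–Jourdain–Moulines,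
"On adaptive stratification"): for a square-integrable `h̃` vanishing outside `[0,1]^m`,
each term `∫_{J_i} h̃² dλ - I^m (∫_{J_i} h̃ dλ)²` is nonnegative, their sum is at most
`(1/2) ∫_{[0,1]^m} ∫_{[-1,1]^m} (h̃(u) - h̃(u + z/I))² dz du`, and the sum tends to `0`
as `I → ∞`. -/
theorem sum_cube_variance_terms_le_and_tendsto_zero
    {m : ℕ} (h : (Fin m → ℝ) → ℝ) (hmeas : Measurable h)
    (hsq : Integrable (fun x => h x ^ 2))
    (hsupp : ∀ x : Fin m → ℝ, x ∉ Set.univ.pi (fun _ => Icc (0 : ℝ) 1) → h x = 0) :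
    (∀ (I : ℕ), 0 < I → ∀ i : Fin m → Fin I,
      0 ≤ (∫ x in unifCube I i, h x ^ 2) - (I : ℝ) ^ m * (∫ x in unifCube I i, h x) ^ 2) ∧
    (∀ I : ℕ, 0 < I →
      ∑ i : Fin m → Fin I,
          ((∫ x in unifCube I i, h x ^ 2) - (I : ℝ) ^ m * (∫ x in unifCube I i, h x) ^ 2) ≤
        1 / 2 * ∫ u in Set.univ.pi (fun _ : Fin m => Icc (0 : ℝ) 1),
          ∫ z in Set.univ.pi (fun _ : Fin m => Icc (-1 : ℝ) 1),
            (h u - h (fun k => u k + z k / I)) ^ 2) ∧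
    Tendsto (fun I : ℕ => ∑ i : Fin m → Fin I,
        ((∫ x in unifCube I i, h x ^ 2) - (I : ℝ) ^ m * (∫ x in unifCube I i, h x) ^ 2))
      atTop (𝓝 0) := by
  refine ⟨fun I hI i => term_nonneg hmeas hsq hI i, fun I hI => ?_, ?_⟩
  · rw [form_eq hmeas I]
    exact sum_term_le hmeas hsq hI
  · refine tendsto_of_tendsto_of_tendsto_of_le_of_le' (tendsto_const_nhds)
      (by simpa using (tendsto_int_KK hmeas hsq).const_mul (1/2 : ℝ)) ?_ ?_
    · filter_upwards [eventually_ge_atTop 1] with I hI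
      exact Finset.sum_nonneg fun i _ => term_nonneg hmeas hsq hI i
    · filter_upwards [eventually_ge_atTop 1] with I hI
      calc ∑ i : Fin m → Fin I,
            ((∫ x in unifCube I i, h x ^ 2) - (I : ℝ) ^ m * (∫ x in unifCube I i, h x) ^ 2)
          ≤ 1/2 * ∫ u in cubeU m, KK h I u := sum_term_le hmeas hsq hI
        _ = 2⁻¹ * ∫ z in cubeZ m, ∫ u in cubeU m, (h u - h (u + (I:ℝ)⁻¹ • z))^2 := by
            rw [swap_KK hmeas hsq hI]; norm_num

end
end

section
/- Assume ∫_{ℝ^m} f√(v − ς²) dλ > 0 and define the density χ*_μ = f√(v − ς²) / ∫_{ℝ^m} f√(v − ς²) dλ. Then ς²_∞(μ,χ*_μ) = (∫_{ℝ^m} f√(v − ς²) dλ)², and for every probability density χ on ℝ^m, ς²_∞(μ,χ) ≥ ς²_∞(μ,χ*_μ), where ς²_∞(μ,χ) = ∫_{ℝ^m} f²(v − ς²)/χ dλ; i.e., χ*_μ minimizes χ ↦ ς²_∞(μ,χ) over probability densities. -/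
open MeasureTheory Set Filter
open scoped ENNReal Topology

noncomputable section

/-- Auxiliary: a measurable real function whose integral vanishes on every measurable
subset of `t` vanishes a.e. on `t`. -/
lemma ae_zero_on_of_forall_setIntegral_zero {E : Type*} [MeasurableSpace E]
    {μ : Measure E} [SigmaFinite μ] {h : E → ℝ}
    (hh : Measurable h) {t : Set E} (ht : MeasurableSet t)
    (H : ∀ S, MeasurableSet S → S ⊆ t → ∫ x in S, h x ∂μ = 0) :
    ∀ᵐ x ∂μ, x ∈ t → h x = 0 := by
  set A : ℕ → Set E := fun n => t ∩ ({x | |h x| ≤ n} ∩ spanningSets μ n) with hA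
  have hAm : ∀ n, MeasurableSet (A n) :=
    fun n => ht.inter ((measurableSet_le hh.abs measurable_const).inter
      (measurableSet_spanningSets μ n))
  have hAfin : ∀ n, μ (A n) < ∞ := fun n =>
    lt_of_le_of_lt (measure_mono (fun x hx => hx.2.2)) (measure_spanningSets_lt_top μ n)
  have hint : ∀ n, IntegrableOn h (A n) μ := by
    intro n
    refine Measure.integrableOn_of_bounded (hAfin n).ne hh.aestronglyMeasurable
      (M := n) ?_
    filter_upwards [self_mem_ae_restrict (hAm n)] with x hx
    exact hx.2.1
  have key : ∀ n, ∀ᵐ x ∂μ, x ∈ A n → h x = 0 := by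
    intro n
    haveI : IsFiniteMeasure (μ.restrict (A n)) :=
      ⟨by rw [Measure.restrict_apply_univ]; exact hAfin n⟩
    have hz : (fun x => h x) =ᵐ[μ.restrict (A n)] 0 := by
      refine ae_eq_zero_of_forall_setIntegral_eq_of_sigmaFinite
        (fun s hs _ => (hint n).integrableOn) (fun s hs _ => ?_)
      rw [Measure.restrict_restrict hs]
      exact H (s ∩ A n) (hs.inter (hAm n)) (fun x hx => hx.2.1)
    exact (ae_restrict_iff' (hAm n)).mp hz
  have key' : ∀ᵐ x ∂μ, ∀ n, x ∈ A n → h x = 0 := ae_all_iff.mpr key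
  filter_upwards [key'] with x hx hxt
  obtain ⟨n₁, hn₁⟩ := exists_nat_ge |h x|
  obtain ⟨n₂, hn₂⟩ : ∃ n, x ∈ spanningSets μ n := by
    have := mem_iUnion.mp (by rw [iUnion_spanningSets]; exact mem_univ x :
      x ∈ ⋃ n, spanningSets μ n)
    exact this
  refine hx (max n₁ n₂) ⟨hxt, ⟨?_, ?_⟩⟩
  · exact hn₁.trans (by exact_mod_cast Nat.le_max_left n₁ n₂)
  · exact monotone_spanningSets μ (Nat.le_max_right n₁ n₂) hn₂

/-- Auxiliary: core analytic statement, in terms of a nonnegative integrable `g`. -/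
lemma core_optimal_allocation {E : Type*} [MeasurableSpace E] {μ : Measure E}
    {g : E → ℝ} (hg : Measurable g) (hgi : Integrable g μ) (hg0 : 0 ≤ᵐ[μ] g)
    (hpos : 0 < ∫ x, g x ∂μ) :
    (∫⁻ x, ENNReal.ofReal (g x ^ 2) / ENNReal.ofReal (g x / ∫ y, g y ∂μ) ∂μ
      = ENNReal.ofReal ((∫ x, g x ∂μ) ^ 2)) ∧
    ∀ χ : E → ℝ, Measurable χ → (∀ x, 0 ≤ χ x) → (∫ x, χ x ∂μ) = 1 →
      ENNReal.ofReal ((∫ x, g x ∂μ) ^ 2) ≤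
        ∫⁻ x, ENNReal.ofReal (g x ^ 2) / ENNReal.ofReal (χ x) ∂μ := by
  set I : ℝ := ∫ x, g x ∂μ with hI
  constructor
  · have hptwise : ∀ᵐ x ∂μ, ENNReal.ofReal (g x ^ 2) / ENNReal.ofReal (g x / I)
        = ENNReal.ofReal (g x * I) := by
      filter_upwards [hg0] with x hx
      rcases eq_or_lt_of_le hx with hx0 | hx0
      · rw [← hx0]; simp
      · have hgx : (0:ℝ) < g x := hx0
        rw [← ENNReal.ofReal_div_of_pos (div_pos hgx hpos)]
        congr 1
        field_simp [hgx.ne']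
    rw [lintegral_congr_ae hptwise,
      ← ofReal_integral_eq_lintegral_ofReal (hgi.mul_const I)
        (hg0.mono fun x hx => mul_nonneg hx hpos.le),
      integral_mul_const, ← sq]
  · intro χ hχm hχ0 hχ1
    have hχi : Integrable χ μ := by
      by_contra hc
      rw [integral_undef hc] at hχ1
      norm_num at hχ1
    set N : E → ℝ≥0∞ := fun x => ENNReal.ofReal (g x ^ 2) with hN
    set b : E → ℝ≥0∞ := fun x => ENNReal.ofReal (χ x) with hb
    have hNm : Measurable N := (hg.pow_const 2).ennreal_ofReal
    have hbm : Measurable b := hχm.ennreal_ofReal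
    by_cases hR : ∫⁻ x, N x / b x ∂μ = ⊤
    · rw [hR]; exact le_top
    have hBnull : μ {x | b x = 0 ∧ N x ≠ 0} = 0 := by
      by_contra hB
      apply hR
      have hBm : MeasurableSet {x | b x = 0 ∧ N x ≠ 0} :=
        (hbm (measurableSet_singleton 0)).inter ((hNm (measurableSet_singleton 0)).compl)
      refine eq_top_iff.mpr ?_
      calc (⊤ : ℝ≥0∞) = ⊤ * μ {x | b x = 0 ∧ N x ≠ 0} := (ENNReal.top_mul hB).symm
        _ = ∫⁻ x in {x | b x = 0 ∧ N x ≠ 0}, ⊤ ∂μ := (setLIntegral_const _ _).symm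
        _ = ∫⁻ x in {x | b x = 0 ∧ N x ≠ 0}, N x / b x ∂μ := by
            refine (setLIntegral_congr_fun hBm (fun x hx => ?_)).symm
            rw [hx.1, ENNReal.div_zero hx.2]
        _ ≤ ∫⁻ x, N x / b x ∂μ := setLIntegral_le_lintegral _ _
    have hae : ∀ᵐ x ∂μ, ENNReal.ofReal (g x) ≤
        ((N x / b x) ^ ((1:ℝ)/2)) * (b x ^ ((1:ℝ)/2)) := by
      filter_upwards [hg0, compl_mem_ae_iff.mpr hBnull] with x hx0 hxB
      by_cases hbx : b x = 0
      · have hNx : N x = 0 := by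
          by_contra hNx
          exact hxB ⟨hbx, hNx⟩
        have : g x = 0 := by
          have h2 : g x ^ 2 ≤ 0 := ENNReal.ofReal_eq_zero.mp hNx
          nlinarith [sq_nonneg (g x)]
        simp [this]
      · have hbt : b x ≠ ⊤ := ENNReal.ofReal_ne_top
        rw [← ENNReal.mul_rpow_of_nonneg _ _ (by norm_num : (0:ℝ) ≤ 1/2),
          ENNReal.div_mul_cancel hbx hbt]
        have hNg : N x = ENNReal.ofReal (g x) ^ 2 := by
          rw [hN]; exact ENNReal.ofReal_pow hx0 2
        rw [hNg, ← ENNReal.rpow_natCast (ENNReal.ofReal (g x)) 2, ← ENNReal.rpow_mul]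
        norm_num
    have hF : AEMeasurable (fun x => (N x / b x) ^ ((1:ℝ)/2)) μ :=
      ((hNm.div hbm).pow_const _).aemeasurable
    have hG : AEMeasurable (fun x => b x ^ ((1:ℝ)/2)) μ :=
      (hbm.pow_const _).aemeasurable
    have hconj : Real.HolderConjugate 2 2 := ⟨by norm_num, by norm_num, by norm_num⟩
    have holder := ENNReal.lintegral_mul_le_Lp_mul_Lq μ hconj hF hG
    have hFp : ∀ x, ((N x / b x) ^ ((1:ℝ)/2)) ^ (2:ℝ) = N x / b x := by
      intro x
      rw [← ENNReal.rpow_mul]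
      norm_num
    have hGp : ∀ x, (b x ^ ((1:ℝ)/2)) ^ (2:ℝ) = b x := by
      intro x
      rw [← ENNReal.rpow_mul]
      norm_num
    have hbint : ∫⁻ x, b x ∂μ = 1 := by
      rw [hb, ← ofReal_integral_eq_lintegral_ofReal hχi (ae_of_all _ hχ0), hχ1,
        ENNReal.ofReal_one]
    have hItoL : ENNReal.ofReal I ≤ (∫⁻ x, N x / b x ∂μ) ^ ((1:ℝ)/2) := by
      calc ENNReal.ofReal I = ∫⁻ x, ENNReal.ofReal (g x) ∂μ :=
            ofReal_integral_eq_lintegral_ofReal hgi hg0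
        _ ≤ ∫⁻ x, ((N x / b x) ^ ((1:ℝ)/2)) * (b x ^ ((1:ℝ)/2)) ∂μ := lintegral_mono_ae hae
        _ ≤ (∫⁻ x, ((N x / b x) ^ ((1:ℝ)/2)) ^ (2:ℝ) ∂μ) ^ ((1:ℝ)/2) *
            (∫⁻ x, (b x ^ ((1:ℝ)/2)) ^ (2:ℝ) ∂μ) ^ ((1:ℝ)/2) := holder
        _ = (∫⁻ x, N x / b x ∂μ) ^ ((1:ℝ)/2) := by
            simp_rw [hFp, hGp]
            rw [hbint, ENNReal.one_rpow, mul_one]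
    calc ENNReal.ofReal (I ^ 2) = (ENNReal.ofReal I) ^ 2 := ENNReal.ofReal_pow hpos.le 2
      _ ≤ ((∫⁻ x, N x / b x ∂μ) ^ ((1:ℝ)/2)) ^ 2 := pow_le_pow_left' hItoL 2
      _ = ∫⁻ x, N x / b x ∂μ := by
          rw [← ENNReal.rpow_natCast _ 2, ← ENNReal.rpow_mul]
          norm_num

/-- Optimality of the allocation density `χ*_μ = f √(v - ς²) / ∫ f √(v - ς²) dλ`
(Etoré–Fort–Jourdain–Moulines, "On adaptive stratification", Section 3): the limiting
variance `ς²_∞(μ, χ) = ∫ f² (v - ς²) / χ dλ` (with the conventions `z/0 = +∞` for `z > 0`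
and `0/0 = 0`, encoded by `ℝ≥0∞`-valued division) satisfies
`ς²_∞(μ, χ*_μ) = (∫ f √(v - ς²) dλ)²` and `ς²_∞(μ, χ) ≥ ς²_∞(μ, χ*_μ)` for every
probability density `χ` on `ℝ^m`. -/
theorem optimal_allocation_density_minimizes_limiting_variance
    {d m : ℕ} (hm : m < d)
    {Ω : Type*} [MeasurableSpace Ω] (P : Measure Ω) [IsProbabilityMeasure P]
    (Y : Ω → Fin d → ℝ) (hY : Measurable Y)
    (φ : (Fin d → ℝ) → ℝ) (hφ : Measurable φ)
    (hφsq : Integrable (fun ω => φ (Y ω) ^ 2) P)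
    (μ : Matrix (Fin d) (Fin m) ℝ) (hμ : μ.transpose * μ = 1)
    (f ς v : (Fin m → ℝ) → ℝ)
    (hf : Measurable f) (hς : Measurable ς) (hv : Measurable v)
    (hdens : ∀ S : Set (Fin m → ℝ), MeasurableSet S →
      P {ω | (fun k => ∑ j, μ j k * Y ω j) ∈ S} = ∫⁻ x in S, ENNReal.ofReal (f x))
    (hςf : ∀ S : Set (Fin m → ℝ), MeasurableSet S →
      ∫ x in S, ς x * f x = ∫ ω in {ω | (fun k => ∑ j, μ j k * Y ω j) ∈ S}, φ (Y ω) ∂P)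
    (hvf : ∀ S : Set (Fin m → ℝ), MeasurableSet S →
      ∫ x in S, v x * f x = ∫ ω in {ω | (fun k => ∑ j, μ j k * Y ω j) ∈ S}, φ (Y ω) ^ 2 ∂P)
    (hpos : 0 < ∫ x, f x * Real.sqrt (v x - ς x ^ 2)) :
    (∫⁻ x, ENNReal.ofReal (f x ^ 2 * (v x - ς x ^ 2)) /
        ENNReal.ofReal (f x * Real.sqrt (v x - ς x ^ 2) /
          ∫ y, f y * Real.sqrt (v y - ς y ^ 2)) =
      ENNReal.ofReal ((∫ x, f x * Real.sqrt (v x - ς x ^ 2)) ^ 2)) ∧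
    ∀ χ : (Fin m → ℝ) → ℝ, Measurable χ → (∀ x, 0 ≤ χ x) → (∫ x, χ x) = 1 →
      ENNReal.ofReal ((∫ x, f x * Real.sqrt (v x - ς x ^ 2)) ^ 2) ≤
        ∫⁻ x, ENNReal.ofReal (f x ^ 2 * (v x - ς x ^ 2)) / ENNReal.ofReal (χ x) := by
  -- the numerator agrees pointwise with the square of `g x = f x * √(v x - ς x ^ 2)`
  have hw_eq : ∀ x, ENNReal.ofReal (f x ^ 2 * (v x - ς x ^ 2))
      = ENNReal.ofReal ((f x * Real.sqrt (v x - ς x ^ 2)) ^ 2) := by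
    intro x
    rcases le_or_gt 0 (v x - ς x ^ 2) with hw | hw
    · rw [mul_pow, Real.sq_sqrt hw]
    · have h1 : Real.sqrt (v x - ς x ^ 2) = 0 := Real.sqrt_eq_zero_of_nonpos hw.le
      rw [h1, mul_zero]
      rw [ENNReal.ofReal_of_nonpos (by nlinarith [sq_nonneg (f x)])]
      simp
  -- integrability of g
  have hgm : Measurable fun x => f x * Real.sqrt (v x - ς x ^ 2) :=
    hf.mul ((hv.sub (hς.pow_const 2)).sqrt)
  have hgi : Integrable (fun x => f x * Real.sqrt (v x - ς x ^ 2)) := by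
    by_contra hc
    rw [integral_undef hc] at hpos
    exact lt_irrefl _ hpos
  -- f is a.e. nonnegative relative to the relevant quantities: on {f < 0} both
  -- conditional moments vanish a.e., hence v - ς² = 0 a.e. there, hence g ≥ 0 a.e.
  have htm : MeasurableSet {x : Fin m → ℝ | f x < 0} :=
    measurableSet_lt hf measurable_const
  have hP0 : P {ω | (fun k => ∑ j, μ j k * Y ω j) ∈ {x | f x < 0}} = 0 := by
    rw [hdens _ htm]
    calc ∫⁻ x in {x | f x < 0}, ENNReal.ofReal (f x)
        = ∫⁻ _ in {x : Fin m → ℝ | f x < 0}, (0:ℝ≥0∞) := by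
          refine setLIntegral_congr_fun htm (fun x hx => ?_)
          exact ENNReal.ofReal_of_nonpos hx.le
      _ = 0 := by simp
  have hsub0 : ∀ S : Set (Fin m → ℝ), MeasurableSet S → S ⊆ {x | f x < 0} →
      P {ω | (fun k => ∑ j, μ j k * Y ω j) ∈ S} = 0 := fun S hS hsub =>
    measure_mono_null (fun ω hω => hsub hω) hP0
  have hς0 : ∀ᵐ x, x ∈ {x : Fin m → ℝ | f x < 0} → ς x * f x = 0 := by
    refine ae_zero_on_of_forall_setIntegral_zero (hς.mul hf) htm (fun S hS hsub => ?_)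
    simp only [Pi.mul_apply]; rw [hςf S hS, Measure.restrict_eq_zero.mpr (hsub0 S hS hsub), integral_zero_measure]
  have hv0 : ∀ᵐ x, x ∈ {x : Fin m → ℝ | f x < 0} → v x * f x = 0 := by
    refine ae_zero_on_of_forall_setIntegral_zero (hv.mul hf) htm (fun S hS hsub => ?_)
    simp only [Pi.mul_apply]; rw [hvf S hS, Measure.restrict_eq_zero.mpr (hsub0 S hS hsub), integral_zero_measure]
  have hg0 : 0 ≤ᵐ[(volume : Measure (Fin m → ℝ))]
      fun x => f x * Real.sqrt (v x - ς x ^ 2) := by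
    filter_upwards [hς0, hv0] with x hx1 hx2
    by_cases hfx : 0 ≤ f x
    · exact mul_nonneg hfx (Real.sqrt_nonneg _)
    · push_neg at hfx
      have hfne : f x ≠ 0 := hfx.ne
      have hςx : ς x = 0 := (mul_eq_zero.mp (hx1 hfx)).resolve_right hfne
      have hvx : v x = 0 := (mul_eq_zero.mp (hx2 hfx)).resolve_right hfne
      have : v x - ς x ^ 2 = 0 := by rw [hςx, hvx]; ring
      rw [this, Real.sqrt_zero, mul_zero]
      exact le_refl (0:ℝ)
  have key := core_optimal_allocation hgm hgi hg0 hpos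
  constructor
  · calc ∫⁻ x, ENNReal.ofReal (f x ^ 2 * (v x - ς x ^ 2)) /
          ENNReal.ofReal (f x * Real.sqrt (v x - ς x ^ 2) /
            ∫ y, f y * Real.sqrt (v y - ς y ^ 2))
        = ∫⁻ x, ENNReal.ofReal ((f x * Real.sqrt (v x - ς x ^ 2)) ^ 2) /
          ENNReal.ofReal (f x * Real.sqrt (v x - ς x ^ 2) /
            ∫ y, f y * Real.sqrt (v y - ς y ^ 2)) :=
          lintegral_congr fun x => by rw [hw_eq x]
      _ = ENNReal.ofReal ((∫ x, f x * Real.sqrt (v x - ς x ^ 2)) ^ 2) := key.1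
  · intro χ hχm hχ0 hχ1
    refine le_trans (key.2 χ hχm hχ0 hχ1) (le_of_eq ?_)
    exact lintegral_congr fun x => by rw [hw_eq x]

end
end

section
/- Let z ∈ ℝ, h : ℝ^d → ℝ a locally bounded Lebesgue-integrable function, and μ ∈ ℝ^d nonzero. Assume h is continuous λ_z^μ-almost everywhere and there exists ε > 0 such that lim_{M→∞} sup_{|ν−μ|≤ε} ∫ |y| 1_{{|y|≥M}} |h(y)| dλ_z^ν(y) = 0. Then the vector-valued map γ(h,·) : ν ↦ ∫ (y/|ν|) h(y) dλ_z^ν(y), defined on ℝ^d \ {0}, is continuous at μ. -/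
open MeasureTheory Set Filter Metric
open scoped ENNReal Topology

noncomputable section

/-- `λ_z^ν`: the `(d-1)`-dimensional Hausdorff measure on `ℝ^d` restricted to the
hyperplane `{y : ⟨ν, y⟩ = z}` (the surface measure of the hyperplane). -/
def hypMeasure {d : ℕ} (ν : EuclideanSpace ℝ (Fin d)) (z : ℝ) :
    Measure (EuclideanSpace ℝ (Fin d)) :=
  (μH[(d : ℝ) - 1]).restrict {y | (inner ℝ ν y : ℝ) = z}

namespace HypAux

variable {E : Type*} [NormedAddCommGroup E] [InnerProductSpace ℝ E]

local notation "⟪" x ", " y "⟫" => @inner ℝ _ _ x y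

/-- Reflection across the hyperplane orthogonal to `w` (identity if `w = 0`). -/
def refl (w x : E) : E := x - (2 * ⟪w, x⟫ / ⟪w, w⟫) • w

lemma refl_zero (x : E) : refl (0 : E) x = x := by simp [refl]

lemma refl_sub (w x y : E) : refl w x - refl w y = refl w (x - y) := by
  have hc : 2 * ⟪w, x - y⟫ / ⟪w, w⟫ = 2 * ⟪w, x⟫ / ⟪w, w⟫ - 2 * ⟪w, y⟫ / ⟪w, w⟫ := by
    rw [inner_sub_right]; ring
  rw [refl, refl, refl, hc, sub_smul]
  abel

lemma refl_smul_arg (w : E) (c : ℝ) (x : E) : refl w (c • x) = c • refl w x := by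
  have hc : 2 * ⟪w, c • x⟫ / ⟪w, w⟫ = c * (2 * ⟪w, x⟫ / ⟪w, w⟫) := by
    rw [real_inner_smul_right]; ring
  rw [refl, refl, hc, smul_sub, smul_smul]

lemma inner_refl_refl (w x y : E) : ⟪refl w x, refl w y⟫ = ⟪x, y⟫ := by
  rcases eq_or_ne w 0 with rfl | hw
  · simp [refl]
  have hc : ⟪w, w⟫ ≠ 0 := inner_self_ne_zero.2 hw
  simp only [refl, inner_sub_left, inner_sub_right, real_inner_smul_left, real_inner_smul_right]
  rw [real_inner_comm x w]
  field_simp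
  ring

lemma inner_refl_left (w x y : E) : ⟪refl w x, y⟫ = ⟪x, refl w y⟫ := by
  simp only [refl, inner_sub_left, inner_sub_right, real_inner_smul_left, real_inner_smul_right]
  rw [real_inner_comm x w]
  ring

lemma refl_refl (w x : E) : refl w (refl w x) = x := by
  rcases eq_or_ne w 0 with rfl | hw
  · simp [refl]
  have hc : ⟪w, w⟫ ≠ 0 := inner_self_ne_zero.2 hw
  have h1 : 2 * ⟪w, refl w x⟫ / ⟪w, w⟫ = -(2 * ⟪w, x⟫ / ⟪w, w⟫) := by
    rw [refl, inner_sub_right, real_inner_smul_right]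
    field_simp
    ring
  conv_lhs => rw [refl]
  rw [h1, neg_smul, sub_neg_eq_add]
  conv_lhs => rw [refl]
  abel

lemma norm_refl (w x : E) : ‖refl w x‖ = ‖x‖ := by
  have := inner_refl_refl w x x
  rw [real_inner_self_eq_norm_mul_norm, real_inner_self_eq_norm_mul_norm] at this
  exact mul_self_inj (norm_nonneg _) (norm_nonneg _) |>.1 this

lemma refl_isometry (w : E) : Isometry (refl w) := by
  refine Isometry.of_dist_eq fun x y => ?_
  rw [dist_eq_norm, dist_eq_norm, refl_sub, norm_refl]

lemma refl_self (w : E) : refl w w = -w := by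
  rcases eq_or_ne w 0 with rfl | hw
  · simp [refl]
  have hc : ⟪w, w⟫ ≠ 0 := inner_self_ne_zero.2 hw
  have : 2 * ⟪w, w⟫ / ⟪w, w⟫ = 2 := by field_simp
  rw [refl, this, two_smul]
  abel

lemma refl_unit_add {u v : E} (hu : ‖u‖ = 1) (hv : ‖v‖ = 1) (hw : u + v ≠ 0) :
    refl (u + v) u = -v := by
  have hc : ⟪u + v, u + v⟫ ≠ 0 := inner_self_ne_zero.2 hw
  have h1 : ⟪u, u⟫ = 1 := by rw [real_inner_self_eq_norm_mul_norm, hu]; norm_num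
  have h2 : ⟪v, v⟫ = 1 := by rw [real_inner_self_eq_norm_mul_norm, hv]; norm_num
  have hcc : ⟪u + v, u + v⟫ = 2 + 2 * ⟪u, v⟫ := by
    simp only [inner_add_left, inner_add_right, h1, h2, real_inner_comm v u]; ring
  have hcu : 2 * ⟪u + v, u⟫ = ⟪u + v, u + v⟫ := by
    simp only [inner_add_left, inner_add_right, h1, h2, real_inner_comm v u, hcc]; ring
  rw [refl, hcu, div_self hc, one_smul]
  abel

lemma refl_smul_vec {c : ℝ} (hc : c ≠ 0) (w x : E) : refl (c • w) x = refl w x := by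
  rcases eq_or_ne w 0 with rfl | hw
  · simp [refl]
  have h0 : ⟪w, w⟫ ≠ 0 := inner_self_ne_zero.2 hw
  rw [refl, refl, real_inner_smul_left, real_inner_smul_left, real_inner_smul_right, smul_smul]
  have key : 2 * (c * ⟪w, x⟫) / (c * (c * ⟪w, w⟫)) * c = 2 * ⟪w, x⟫ / ⟪w, w⟫ := by
    field_simp
  rw [key]
section Phi

variable {n : ℕ}

/-- Fixed linear isometry from `ℝ^n` onto the orthogonal complement of `μ`. -/
def Jmap {μ : EuclideanSpace ℝ (Fin (n+1))} (hμ : μ ≠ 0) :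
    EuclideanSpace ℝ (Fin n) → EuclideanSpace ℝ (Fin (n+1)) :=
  haveI : Fact (Module.finrank ℝ (EuclideanSpace ℝ (Fin (n+1))) = n + 1) :=
    ⟨finrank_euclideanSpace_fin⟩
  fun x => ((OrthonormalBasis.fromOrthogonalSpanSingleton n hμ).repr.symm x :
    EuclideanSpace ℝ (Fin (n+1)))

lemma Jmap_isometry {μ : EuclideanSpace ℝ (Fin (n+1))} (hμ : μ ≠ 0) : Isometry (Jmap hμ) := by
  haveI : Fact (Module.finrank ℝ (EuclideanSpace ℝ (Fin (n+1))) = n + 1) :=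
    ⟨finrank_euclideanSpace_fin⟩
  exact isometry_subtype_coe.comp
    (OrthonormalBasis.fromOrthogonalSpanSingleton n hμ).repr.symm.isometry

lemma Jmap_zero {μ : EuclideanSpace ℝ (Fin (n+1))} (hμ : μ ≠ 0) : Jmap hμ 0 = 0 := by
  haveI : Fact (Module.finrank ℝ (EuclideanSpace ℝ (Fin (n+1))) = n + 1) :=
    ⟨finrank_euclideanSpace_fin⟩
  simp [Jmap]

lemma Jmap_norm {μ : EuclideanSpace ℝ (Fin (n+1))} (hμ : μ ≠ 0) (x : EuclideanSpace ℝ (Fin n)) :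
    ‖Jmap hμ x‖ = ‖x‖ :=
  (Jmap_isometry hμ).norm_map_of_map_zero (Jmap_zero hμ) x

lemma Jmap_inner {μ : EuclideanSpace ℝ (Fin (n+1))} (hμ : μ ≠ 0) (x : EuclideanSpace ℝ (Fin n)) :
    ⟪μ, Jmap hμ x⟫ = 0 := by
  haveI : Fact (Module.finrank ℝ (EuclideanSpace ℝ (Fin (n+1))) = n + 1) :=
    ⟨finrank_euclideanSpace_fin⟩
  exact Submodule.mem_orthogonal_singleton_iff_inner_right.1
    ((OrthonormalBasis.fromOrthogonalSpanSingleton n hμ).repr.symm x).2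

lemma Jmap_surj {μ : EuclideanSpace ℝ (Fin (n+1))} (hμ : μ ≠ 0)
    {t : EuclideanSpace ℝ (Fin (n+1))} (ht : ⟪μ, t⟫ = 0) : ∃ x, Jmap hμ x = t := by
  haveI : Fact (Module.finrank ℝ (EuclideanSpace ℝ (Fin (n+1))) = n + 1) :=
    ⟨finrank_euclideanSpace_fin⟩
  refine ⟨(OrthonormalBasis.fromOrthogonalSpanSingleton n hμ).repr
    ⟨t, Submodule.mem_orthogonal_singleton_iff_inner_right.2 ht⟩, ?_⟩
  simp [Jmap]

/-- The parametrized affine isometry from `ℝ^n` onto the hyperplane `{y | ⟪ν, y⟫ = z}`. -/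
def Phi (z : ℝ) {μ : EuclideanSpace ℝ (Fin (n+1))} (hμ : μ ≠ 0)
    (ν : EuclideanSpace ℝ (Fin (n+1))) (x : EuclideanSpace ℝ (Fin n)) :
    EuclideanSpace ℝ (Fin (n+1)) :=
  (z / ‖ν‖ ^ 2) • ν +
    refl (‖μ‖⁻¹ • μ + ‖ν‖⁻¹ • ν) (refl (‖μ‖⁻¹ • μ) (Jmap hμ x))

variable {z : ℝ} {μ ν : EuclideanSpace ℝ (Fin (n+1))}

lemma phi_isometry (hμ : μ ≠ 0) (ν : EuclideanSpace ℝ (Fin (n+1))) :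
    Isometry (Phi z hμ ν) :=
  (isometry_add_left _).comp (((refl_isometry _).comp (refl_isometry _)).comp (Jmap_isometry hμ))

lemma norm_unit (hμ : μ ≠ 0) : ‖‖μ‖⁻¹ • μ‖ = 1 := norm_smul_inv_norm hμ

lemma unit_ne_zero (hμ : μ ≠ 0) : ‖μ‖⁻¹ • μ ≠ 0 := by
  intro hc
  have := norm_unit hμ
  rw [hc, norm_zero] at this
  norm_num at this

lemma inner_nu_refl (hμ : μ ≠ 0) (hν : ν ≠ 0)
    (hw : ‖μ‖⁻¹ • μ + ‖ν‖⁻¹ • ν ≠ 0) {t : EuclideanSpace ℝ (Fin (n+1))} (ht : ⟪μ, t⟫ = 0) :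
    ⟪ν, refl (‖μ‖⁻¹ • μ + ‖ν‖⁻¹ • ν) (refl (‖μ‖⁻¹ • μ) t)⟫ = 0 := by
  set u := ‖μ‖⁻¹ • μ with hu
  set v := ‖ν‖⁻¹ • ν with hv
  have hrw : refl (u + v) ν = -(‖ν‖ • u) := by
    have h1 : ν = ‖ν‖ • v := by rw [hv, smul_inv_smul₀ (norm_ne_zero_iff.2 hν)]
    have h2 : refl (u + v) v = -u := by
      rw [add_comm u v]
      exact refl_unit_add (norm_unit hν) (norm_unit hμ) (by rwa [add_comm v u])
    conv_lhs => rw [h1, refl_smul_arg, h2, smul_neg]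
  rw [← inner_refl_left, hrw]
  have h3 : ⟪u, refl u t⟫ = -⟪u, t⟫ := by
    rw [← inner_refl_left, refl_self, inner_neg_left]
  rw [inner_neg_left, real_inner_smul_left, h3]
  have h4 : ⟪u, t⟫ = 0 := by rw [hu, real_inner_smul_left, ht, mul_zero]
  rw [h4]; ring

lemma phi_inner_eq (hμ : μ ≠ 0) (hν : ν ≠ 0)
    (hw : ‖μ‖⁻¹ • μ + ‖ν‖⁻¹ • ν ≠ 0) (x : EuclideanSpace ℝ (Fin n)) :
    ⟪ν, Phi z hμ ν x⟫ = z := by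
  rw [Phi, inner_add_right, inner_nu_refl hμ hν hw (Jmap_inner hμ x), add_zero,
    real_inner_smul_right, real_inner_self_eq_norm_mul_norm]
  have : ‖ν‖ ≠ 0 := norm_ne_zero_iff.2 hν
  field_simp

lemma phi_norm_sq (hμ : μ ≠ 0) (hν : ν ≠ 0)
    (hw : ‖μ‖⁻¹ • μ + ‖ν‖⁻¹ • ν ≠ 0) (x : EuclideanSpace ℝ (Fin n)) :
    ‖Phi z hμ ν x‖ ^ 2 = ‖(z / ‖ν‖ ^ 2) • ν‖ ^ 2 + ‖x‖ ^ 2 := by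
  rw [Phi, norm_add_sq_real]
  have h1 : ⟪(z / ‖ν‖ ^ 2) • ν, refl (‖μ‖⁻¹ • μ + ‖ν‖⁻¹ • ν) (refl (‖μ‖⁻¹ • μ) (Jmap hμ x))⟫
      = 0 := by
    rw [real_inner_smul_left, inner_nu_refl hμ hν hw (Jmap_inner hμ x), mul_zero]
  rw [h1, norm_refl, norm_refl, Jmap_norm]
  ring

lemma phi_norm_le (hμ : μ ≠ 0) (hν : ν ≠ 0)
    (hw : ‖μ‖⁻¹ • μ + ‖ν‖⁻¹ • ν ≠ 0) (x : EuclideanSpace ℝ (Fin n)) :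
    ‖x‖ ≤ ‖Phi z hμ ν x‖ := by
  nlinarith [phi_norm_sq (z := z) hμ hν hw x, norm_nonneg x, norm_nonneg (Phi z hμ ν x),
    norm_nonneg ((z / ‖ν‖ ^ 2) • ν), sq_nonneg (‖x‖ - ‖Phi z hμ ν x‖),
    sq_nonneg (‖x‖ + ‖Phi z hμ ν x‖)]

lemma phi_range (hμ : μ ≠ 0) (hν : ν ≠ 0)
    (hw : ‖μ‖⁻¹ • μ + ‖ν‖⁻¹ • ν ≠ 0) :
    Set.range (Phi z hμ ν) = {y : EuclideanSpace ℝ (Fin (n+1)) | ⟪ν, y⟫ = z} := by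
  apply Set.Subset.antisymm
  · rintro y ⟨x, rfl⟩
    exact phi_inner_eq hμ hν hw x
  · intro y hy
    set u := ‖μ‖⁻¹ • μ with hu
    set v := ‖ν‖⁻¹ • ν with hv
    set q := y - (z / ‖ν‖ ^ 2) • ν with hq
    have hνn : ‖ν‖ ≠ 0 := norm_ne_zero_iff.2 hν
    have hq0 : ⟪ν, q⟫ = 0 := by
      rw [hq, inner_sub_right, real_inner_smul_right, real_inner_self_eq_norm_mul_norm]
      have : (z : ℝ) = ⟪ν, y⟫ := (hy : ⟪ν, y⟫ = z).symm
      rw [← this]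
      field_simp
      ring
    have hμu : μ = ‖μ‖ • u := by rw [hu, smul_inv_smul₀ (norm_ne_zero_iff.2 hμ)]
    have hreflu : refl u μ = -μ := by
      conv_lhs => rw [hμu, refl_smul_arg, refl_self, smul_neg]
      rw [← hμu]
    have hreflw : refl (u + v) μ = -(‖μ‖ • v) := by
      have h2 : refl (u + v) u = -v := refl_unit_add (norm_unit hμ) (norm_unit hν) hw
      conv_lhs => rw [hμu, refl_smul_arg, h2, smul_neg]
    have ht : ⟪μ, refl u (refl (u + v) q)⟫ = 0 := by
      rw [← inner_refl_left, hreflu, inner_neg_left, ← inner_refl_left, hreflw,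
        inner_neg_left, neg_neg, real_inner_smul_left, hv, real_inner_smul_left, hq0]
      ring
    obtain ⟨x, hx⟩ := Jmap_surj hμ ht
    refine ⟨x, ?_⟩
    rw [Phi, hx, refl_refl, refl_refl, hq]
    abel

lemma phi_at_self (hμ : μ ≠ 0) (x : EuclideanSpace ℝ (Fin n)) :
    Phi z hμ μ x = (z / ‖μ‖ ^ 2) • μ + Jmap hμ x := by
  rw [Phi]
  congr 1
  have : ‖μ‖⁻¹ • μ + ‖μ‖⁻¹ • μ = (2 : ℝ) • (‖μ‖⁻¹ • μ) := (two_smul ℝ _).symm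
  rw [this, refl_smul_vec (two_ne_zero), refl_refl]

lemma phi_continuousAt (hμ : μ ≠ 0) (x : EuclideanSpace ℝ (Fin n)) :
    ContinuousAt (fun ν => Phi z hμ ν x) μ := by
  have hnμ : ‖μ‖ ≠ 0 := norm_ne_zero_iff.2 hμ
  set u := ‖μ‖⁻¹ • μ with hu
  set t := refl u (Jmap hμ x) with htdef
  have hcw : ContinuousAt (fun ν : EuclideanSpace ℝ (Fin (n+1)) => u + ‖ν‖⁻¹ • ν) μ := by
    exact continuousAt_const.add ((continuousAt_id.norm.inv₀ hnμ).smul continuousAt_id)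
  have hwμ : (fun ν : EuclideanSpace ℝ (Fin (n+1)) => u + ‖ν‖⁻¹ • ν) μ = u + u := rfl
  have hww : ⟪u + u, u + u⟫ ≠ 0 := by
    apply inner_self_ne_zero.2
    have : u + u = (2 : ℝ) • u := (two_smul ℝ _).symm
    rw [this]
    exact smul_ne_zero two_ne_zero (unit_ne_zero hμ)
  have hinner : ContinuousAt (fun ν : EuclideanSpace ℝ (Fin (n+1)) =>
      (2 * ⟪u + ‖ν‖⁻¹ • ν, t⟫ / ⟪u + ‖ν‖⁻¹ • ν, u + ‖ν‖⁻¹ • ν⟫)) μ := by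
    refine ContinuousAt.div ?_ ?_ (by exact hww)
    · exact (continuousAt_const.mul (hcw.inner continuousAt_const))
    · exact hcw.inner hcw
  have hmain : ContinuousAt (fun ν : EuclideanSpace ℝ (Fin (n+1)) =>
      (z / ‖ν‖ ^ 2) • ν + (t - (2 * ⟪u + ‖ν‖⁻¹ • ν, t⟫ / ⟪u + ‖ν‖⁻¹ • ν, u + ‖ν‖⁻¹ • ν⟫) •
        (u + ‖ν‖⁻¹ • ν))) μ := by
    refine ContinuousAt.add (ContinuousAt.fun_smul ?_ continuousAt_id)
      (ContinuousAt.sub continuousAt_const (hinner.smul hcw))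
    exact continuousAt_const.div (continuousAt_id.norm.pow 2) (by positivity)
  convert hmain using 2
  rfl

end Phi

section MeasureLemmas

open scoped NNReal

/-- Comparison of the Hausdorff measure with Lebesgue measure on `ℝ^n`. -/
lemma exists_hausdorff_le_const_volume (n : ℕ) :
    ∃ C : ℝ≥0∞, C ≠ ∞ ∧ ∀ s : Set (EuclideanSpace ℝ (Fin n)), MeasurableSet s →
      μH[(n : ℝ)] s ≤ C * volume s := by
  set e := WithLp.equiv 2 (∀ _ : Fin n, ℝ) with he
  have hL : LipschitzWith ((Fintype.card (Fin n) : ℝ≥0) ^ (1 / (2:ℝ≥0∞)).toReal) ⇑e.symm :=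
    (PiLp.antilipschitzWith_ofLp 2 _).to_rightInverse e.apply_symm_apply
  refine ⟨(((Fintype.card (Fin n) : ℝ≥0) ^ (1 / (2:ℝ≥0∞)).toReal : ℝ≥0) : ℝ≥0∞) ^ (n : ℝ),
    ENNReal.rpow_ne_top_of_nonneg (Nat.cast_nonneg n) ENNReal.coe_ne_top, fun s hs => ?_⟩
  have h1 : μH[(n : ℝ)] s = μH[(n : ℝ)] (⇑e.symm '' (⇑e '' s)) := by
    rw [Equiv.symm_image_image]
  have h2 := hL.hausdorffMeasure_image_le (Nat.cast_nonneg n) (⇑e '' s)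
  have h3 : (μH[(n : ℝ)] : Measure (∀ _ : Fin n, ℝ)) (⇑e '' s) = volume (⇑e '' s) := by
    have := hausdorffMeasure_pi_real (ι := Fin n)
    rw [Fintype.card_fin] at this
    rw [this]
  have h4 : volume (⇑e '' s) = volume s := by
    rw [Equiv.image_eq_preimage_symm]
    have hp := (EuclideanSpace.volume_preserving_symm_measurableEquiv_toLp (Fin n)).symm
    have hco : ⇑(MeasurableEquiv.toLp 2 (Fin n → ℝ)) = ⇑e.symm := by
      rfl
    rw [← hco]
    exact hp.measure_preimage hs.nullMeasurableSet
  rw [h1]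
  calc μH[(n : ℝ)] (⇑e.symm '' (⇑e '' s))
      ≤ _ ^ (n:ℝ) * μH[(n : ℝ)] (⇑e '' s) := h2
    _ = _ ^ (n:ℝ) * volume s := by rw [h3, h4]

lemma volume_norm_eq_null (n : ℕ) {r : ℝ} (hr : r ≠ 0) :
    volume {x : EuclideanSpace ℝ (Fin n) | ‖x‖ = r} = 0 := by
  have hset : {x : EuclideanSpace ℝ (Fin n) | ‖x‖ = r} = Metric.sphere 0 r := by
    ext x; simp [mem_sphere_zero_iff_norm]
  rw [hset]
  exact MeasureTheory.Measure.addHaar_sphere_of_ne_zero volume 0 hr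

end MeasureLemmas

end HypAux

open HypAux
open scoped RealInnerProductSpace

/-- Continuity of `γ(h, ·) : ν ↦ ∫ (y/|ν|) h(y) dλ_z^ν(y)` at `μ` (proof of
Proposition 4.1 in Etoré–Fort–Jourdain–Moulines, "On adaptive stratification"). -/
theorem continuousWithinAt_hyperplane_vector_integral
    {d : ℕ} (z : ℝ) (h : EuclideanSpace ℝ (Fin d) → ℝ)
    (hmeas : Measurable h) (hint : Integrable h volume)
    (hloc : ∀ r : ℝ, ∃ C : ℝ, ∀ y, ‖y‖ ≤ r → |h y| ≤ C)
    (μ : EuclideanSpace ℝ (Fin d)) (hμ : μ ≠ 0)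
    (hcont : ∀ᵐ y ∂(hypMeasure μ z), ContinuousAt h y)
    (hunif : ∃ ε > 0, Tendsto (fun M : ℝ =>
        ⨆ ν ∈ closedBall μ ε,
          ∫⁻ y in {y : EuclideanSpace ℝ (Fin d) | M ≤ ‖y‖},
            ENNReal.ofReal (‖y‖ * |h y|) ∂(hypMeasure ν z))
      atTop (𝓝 0)) :
    ContinuousWithinAt
      (fun ν : EuclideanSpace ℝ (Fin d) => ‖ν‖⁻¹ • ∫ y, h y • y ∂(hypMeasure ν z))
      {ν : EuclideanSpace ℝ (Fin d) | ν ≠ 0} μ := by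
  classical
  rcases d with _ | n
  · exact absurd (Subsingleton.elim μ 0) hμ
  obtain ⟨ε₀, hε₀, htend⟩ := hunif
  have hnμ : ‖μ‖ ≠ 0 := norm_ne_zero_iff.2 hμ
  have hnμpos : (0:ℝ) < ‖μ‖ := norm_pos_iff.2 hμ
  set σ : Measure (EuclideanSpace ℝ (Fin n)) := μH[(n : ℝ)] with hσdef
  have hexp : ((n + 1 : ℕ) : ℝ) - 1 = (n : ℝ) := by push_cast; ring
  -- the pushforward description of the hyperplane measures
  have hemb : ∀ ν : EuclideanSpace ℝ (Fin (n+1)), MeasurableEmbedding (Phi z hμ ν) :=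
    fun ν => ((phi_isometry hμ ν).isClosedEmbedding).measurableEmbedding
  have hmap : ∀ ν : EuclideanSpace ℝ (Fin (n+1)), ν ≠ 0 → ‖μ‖⁻¹ • μ + ‖ν‖⁻¹ • ν ≠ 0 →
      Measure.map (Phi z hμ ν) σ = hypMeasure ν z := by
    intro ν h1 h2
    simp only [hypMeasure, hσdef, ← hexp]
    rw [(phi_isometry hμ ν).map_hausdorffMeasure (Or.inl (by rw [hexp]; positivity)),
      phi_range hμ h1 h2]
  obtain ⟨Cσ, hCσ, hCle⟩ := exists_hausdorff_le_const_volume n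
  have hσball : ∀ M : ℝ, σ (closedBall 0 M) < ∞ := fun M =>
    lt_of_le_of_lt (hCle _ measurableSet_closedBall)
      (ENNReal.mul_lt_top hCσ.lt_top measure_closedBall_lt_top)
  have hσnull : ∀ s : Set (EuclideanSpace ℝ (Fin n)), volume s = 0 → σ s = 0 := by
    intro s hs
    have h1 : σ s ≤ σ (toMeasurable volume s) := measure_mono (subset_toMeasurable _ _)
    have h2 := hCle _ (measurableSet_toMeasurable volume s)
    rw [measure_toMeasurable, hs, mul_zero] at h2
    exact le_antisymm (h1.trans h2) (zero_le)
  -- the good neighborhood of μ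
  set r₀ : ℝ := min ε₀ (‖μ‖ / 2) with hr₀def
  have hr₀ : 0 < r₀ := lt_min hε₀ (by positivity)
  have hball : ∀ ν ∈ ball μ r₀, 0 < ⟪μ, ν⟫ := by
    intro ν hν
    have h1 : ‖ν - μ‖ < ‖μ‖ / 2 :=
      lt_of_lt_of_le (mem_ball_iff_norm.1 hν) (min_le_right _ _)
    have h2 : |⟪μ, ν - μ⟫| ≤ ‖μ‖ * ‖ν - μ‖ := abs_real_inner_le_norm μ (ν - μ)
    have h3 : ⟪μ, ν⟫ = ‖μ‖ * ‖μ‖ + ⟪μ, ν - μ⟫ := by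
      rw [inner_sub_right, real_inner_self_eq_norm_mul_norm]; ring
    have h4 := neg_abs_le ⟪μ, ν - μ⟫
    nlinarith [norm_nonneg (ν - μ)]
  have hne : ∀ ν ∈ ball μ r₀, ν ≠ 0 := by
    intro ν hν h0
    have := hball ν hν
    rw [h0, inner_zero_right] at this
    exact lt_irrefl _ this
  have hwne : ∀ ν ∈ ball μ r₀, ‖μ‖⁻¹ • μ + ‖ν‖⁻¹ • ν ≠ 0 := by
    intro ν hν hc
    have hnν : (0:ℝ) < ‖ν‖ := norm_pos_iff.2 (hne ν hν)
    have h0 : ⟪‖μ‖⁻¹ • μ + ‖ν‖⁻¹ • ν, ν⟫ = 0 := by rw [hc, inner_zero_left]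
    rw [inner_add_left, real_inner_smul_left, real_inner_smul_left,
      real_inner_self_eq_norm_mul_norm] at h0
    have h5 : ‖ν‖⁻¹ * (‖ν‖ * ‖ν‖) = ‖ν‖ := by field_simp
    have h6 := hball ν hν
    rw [h5] at h0
    nlinarith [mul_pos (inv_pos.2 hnμpos) h6]
  have hμball : μ ∈ ball μ r₀ := mem_ball_self hr₀
  have hballsub : ball μ r₀ ⊆ closedBall μ ε₀ := fun ν hν =>
    (closedBall_subset_closedBall (min_le_left _ _)) (ball_subset_closedBall hν)
  set s : Set (EuclideanSpace ℝ (Fin (n+1))) := {ν | ν ≠ 0} with hsdef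
  have hballev : ∀ᶠ ν in 𝓝[s] μ, ν ∈ ball μ r₀ :=
    Filter.eventually_of_mem (mem_nhdsWithin_of_mem_nhds (ball_mem_nhds μ hr₀)) fun x hx => hx
  -- reduce to the integral over σ
  have hFG : ∀ ν ∈ ball μ r₀,
      ∫ y, h y • y ∂(hypMeasure ν z) =
        ∫ x, h (Phi z hμ ν x) • Phi z hμ ν x ∂σ := by
    intro ν hν
    rw [← hmap ν (hne ν hν) (hwne ν hν), (hemb ν).integral_map]
  have hT : Tendsto (fun ν => ∫ x, h (Phi z hμ ν x) • Phi z hμ ν x ∂σ) (𝓝[s] μ)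
      (𝓝 (∫ x, h (Phi z hμ μ x) • Phi z hμ μ x ∂σ)) := by
    have hΦcont : ∀ ν : EuclideanSpace ℝ (Fin (n+1)), Continuous (Phi z hμ ν) :=
      fun ν => (phi_isometry hμ ν).continuous
    rw [Metric.tendsto_nhds]
    intro ε hε
    -- choose the truncation level M
    have h4 : (0:ℝ≥0∞) < ENNReal.ofReal (ε/4) := ENNReal.ofReal_pos.2 (by positivity)
    obtain ⟨M, hMsup, hMc⟩ :=
      ((htend.eventually (gt_mem_nhds h4)).and (eventually_gt_atTop (|z| / ‖μ‖))).exists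
    have hcz : (0:ℝ) ≤ |z| / ‖μ‖ := div_nonneg (abs_nonneg z) hnμpos.le
    have hM0 : 0 ≤ M := le_of_lt (lt_of_le_of_lt hcz hMc)
    obtain ⟨C, hC⟩ := hloc M
    have hC0 : 0 ≤ C := le_trans (abs_nonneg _) (hC 0 (by rw [norm_zero]; exact hM0))
    -- measurability facts
    have hSmeas : ∀ ν : EuclideanSpace ℝ (Fin (n+1)),
        MeasurableSet {x : EuclideanSpace ℝ (Fin n) | ‖Phi z hμ ν x‖ ≤ M} := fun ν =>
      (isClosed_le (hΦcont ν).norm continuous_const).measurableSet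
    have hfsm : ∀ ν : EuclideanSpace ℝ (Fin (n+1)),
        StronglyMeasurable (fun x => h (Phi z hμ ν x) • Phi z hμ ν x) := fun ν =>
      ((hmeas.comp (hΦcont ν).measurable).stronglyMeasurable.smul
        (hΦcont ν).measurable.stronglyMeasurable)
    -- the dominating function
    have hbint : Integrable
        ((closedBall (0:EuclideanSpace ℝ (Fin n)) M).indicator (fun _ => C * M)) σ := by
      rw [integrable_indicator_iff measurableSet_closedBall]
      exact integrableOn_const (hσball M).ne
    have hψle : ∀ ν ∈ ball μ r₀, ∀ x : EuclideanSpace ℝ (Fin n),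
        ‖({x : EuclideanSpace ℝ (Fin n) | ‖Phi z hμ ν x‖ ≤ M}).indicator
            (fun x => h (Phi z hμ ν x) • Phi z hμ ν x) x‖ ≤
          (closedBall (0:EuclideanSpace ℝ (Fin n)) M).indicator (fun _ => C * M) x := by
      intro ν hν x
      by_cases hx : x ∈ {x : EuclideanSpace ℝ (Fin n) | ‖Phi z hμ ν x‖ ≤ M}
      · have hxM : ‖Phi z hμ ν x‖ ≤ M := hx
        have hxb : x ∈ closedBall (0:EuclideanSpace ℝ (Fin n)) M :=
          mem_closedBall_zero_iff.2
            ((phi_norm_le hμ (hne ν hν) (hwne ν hν) x).trans hxM)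
        rw [Set.indicator_of_mem hx, Set.indicator_of_mem hxb, norm_smul, Real.norm_eq_abs]
        exact mul_le_mul (hC _ hxM) hxM (norm_nonneg _) hC0
      · rw [Set.indicator_of_notMem hx, norm_zero]
        exact Set.indicator_nonneg (fun _ _ => by positivity) x
    have hψint : ∀ ν ∈ ball μ r₀, Integrable
        (({x : EuclideanSpace ℝ (Fin n) | ‖Phi z hμ ν x‖ ≤ M}).indicator
          (fun x => h (Phi z hμ ν x) • Phi z hμ ν x)) σ := fun ν hν =>
      hbint.mono' ((hfsm ν).indicator (hSmeas ν)).aestronglyMeasurable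
        (Filter.Eventually.of_forall (hψle ν hν))
    -- the tail bound
    have htub : ∀ ν ∈ ball μ r₀,
        ∫⁻ x, ENNReal.ofReal
            ‖({x : EuclideanSpace ℝ (Fin n) | ‖Phi z hμ ν x‖ ≤ M}ᶜ).indicator
              (fun x => h (Phi z hμ ν x) • Phi z hμ ν x) x‖ ∂σ <
          ENNReal.ofReal (ε/4) := by
      intro ν hν
      have hstep : ∀ x : EuclideanSpace ℝ (Fin n),
          ENNReal.ofReal
              ‖({x : EuclideanSpace ℝ (Fin n) | ‖Phi z hμ ν x‖ ≤ M}ᶜ).indicator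
                (fun x => h (Phi z hμ ν x) • Phi z hμ ν x) x‖ =
            ({x : EuclideanSpace ℝ (Fin n) | ‖Phi z hμ ν x‖ ≤ M}ᶜ).indicator
              (fun x => ENNReal.ofReal (‖Phi z hμ ν x‖ * |h (Phi z hμ ν x)|)) x := by
        intro x
        by_cases hx : x ∈ {x : EuclideanSpace ℝ (Fin n) | ‖Phi z hμ ν x‖ ≤ M}ᶜ
        · rw [Set.indicator_of_mem hx, Set.indicator_of_mem hx, norm_smul,
            Real.norm_eq_abs, mul_comm]
        · rw [Set.indicator_of_notMem hx, Set.indicator_of_notMem hx, norm_zero,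
            ENNReal.ofReal_zero]
      calc ∫⁻ x, ENNReal.ofReal
              ‖({x : EuclideanSpace ℝ (Fin n) | ‖Phi z hμ ν x‖ ≤ M}ᶜ).indicator
                (fun x => h (Phi z hμ ν x) • Phi z hμ ν x) x‖ ∂σ
          = ∫⁻ x in {x : EuclideanSpace ℝ (Fin n) | ‖Phi z hμ ν x‖ ≤ M}ᶜ,
              ENNReal.ofReal (‖Phi z hμ ν x‖ * |h (Phi z hμ ν x)|) ∂σ := by
            rw [lintegral_congr hstep, lintegral_indicator (hSmeas ν).compl]
        _ ≤ ∫⁻ x in (Phi z hμ ν) ⁻¹' {y : EuclideanSpace ℝ (Fin (n+1)) | M ≤ ‖y‖},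
              ENNReal.ofReal (‖Phi z hμ ν x‖ * |h (Phi z hμ ν x)|) ∂σ := by
            refine lintegral_mono_set ?_
            intro x hx
            simp only [Set.mem_compl_iff, Set.mem_setOf_eq, not_le] at hx
            exact le_of_lt hx
        _ = ∫⁻ y in {y : EuclideanSpace ℝ (Fin (n+1)) | M ≤ ‖y‖},
              ENNReal.ofReal (‖y‖ * |h y|) ∂(Measure.map (Phi z hμ ν) σ) := by
            rw [(hemb ν).restrict_map, (hemb ν).lintegral_map]
        _ = ∫⁻ y in {y : EuclideanSpace ℝ (Fin (n+1)) | M ≤ ‖y‖},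
              ENNReal.ofReal (‖y‖ * |h y|) ∂(hypMeasure ν z) := by
            rw [hmap ν (hne ν hν) (hwne ν hν)]
        _ ≤ ⨆ ν' ∈ closedBall μ ε₀,
              ∫⁻ y in {y : EuclideanSpace ℝ (Fin (n+1)) | M ≤ ‖y‖},
                ENNReal.ofReal (‖y‖ * |h y|) ∂(hypMeasure ν' z) :=
            le_biSup (fun ν' => ∫⁻ y in {y : EuclideanSpace ℝ (Fin (n+1)) | M ≤ ‖y‖},
              ENNReal.ofReal (‖y‖ * |h y|) ∂(hypMeasure ν' z)) (hballsub hν)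
        _ < ENNReal.ofReal (ε/4) := hMsup
    have hτint : ∀ ν ∈ ball μ r₀, Integrable
        (({x : EuclideanSpace ℝ (Fin n) | ‖Phi z hμ ν x‖ ≤ M}ᶜ).indicator
          (fun x => h (Phi z hμ ν x) • Phi z hμ ν x)) σ := by
      intro ν hν
      refine ⟨((hfsm ν).indicator (hSmeas ν).compl).aestronglyMeasurable, ?_⟩
      rw [hasFiniteIntegral_iff_norm]
      exact (htub ν hν).trans ENNReal.ofReal_lt_top
    have hsplit : ∀ ν ∈ ball μ r₀,
        ∫ x, h (Phi z hμ ν x) • Phi z hμ ν x ∂σ =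
          (∫ x, ({x : EuclideanSpace ℝ (Fin n) | ‖Phi z hμ ν x‖ ≤ M}).indicator
              (fun x => h (Phi z hμ ν x) • Phi z hμ ν x) x ∂σ) +
            ∫ x, ({x : EuclideanSpace ℝ (Fin n) | ‖Phi z hμ ν x‖ ≤ M}ᶜ).indicator
              (fun x => h (Phi z hμ ν x) • Phi z hμ ν x) x ∂σ := by
      intro ν hν
      rw [← integral_add (hψint ν hν) (hτint ν hν)]
      refine integral_congr_ae (Filter.Eventually.of_forall fun x => ?_)
      exact (congrFun (Set.indicator_self_add_compl
        {x : EuclideanSpace ℝ (Fin n) | ‖Phi z hμ ν x‖ ≤ M}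
        (fun x => h (Phi z hμ ν x) • Phi z hμ ν x)) x).symm
    have hτnorm : ∀ ν ∈ ball μ r₀,
        ‖∫ x, ({x : EuclideanSpace ℝ (Fin n) | ‖Phi z hμ ν x‖ ≤ M}ᶜ).indicator
            (fun x => h (Phi z hμ ν x) • Phi z hμ ν x) x ∂σ‖ ≤ ε/4 := by
      intro ν hν
      refine (norm_integral_le_lintegral_norm _).trans ?_
      calc (∫⁻ x, ENNReal.ofReal
              ‖({x : EuclideanSpace ℝ (Fin n) | ‖Phi z hμ ν x‖ ≤ M}ᶜ).indicator
                (fun x => h (Phi z hμ ν x) • Phi z hμ ν x) x‖ ∂σ).toReal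
          ≤ (ENNReal.ofReal (ε/4)).toReal :=
            ENNReal.toReal_mono ENNReal.ofReal_ne_top (htub ν hν).le
        _ = ε/4 := ENNReal.toReal_ofReal (by positivity)
    -- dominated convergence for the truncated part
    have hψtend : Tendsto (fun ν : EuclideanSpace ℝ (Fin (n+1)) =>
          ∫ x, ({x : EuclideanSpace ℝ (Fin n) | ‖Phi z hμ ν x‖ ≤ M}).indicator
            (fun x => h (Phi z hμ ν x) • Phi z hμ ν x) x ∂σ) (𝓝[s] μ)
        (𝓝 (∫ x, ({x : EuclideanSpace ℝ (Fin n) | ‖Phi z hμ μ x‖ ≤ M}).indicator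
            (fun x => h (Phi z hμ μ x) • Phi z hμ μ x) x ∂σ)) := by
      refine tendsto_integral_filter_of_dominated_convergence _
        (Filter.Eventually.of_forall fun ν =>
          ((hfsm ν).indicator (hSmeas ν)).aestronglyMeasurable)
        (hballev.mono fun ν hν => Filter.Eventually.of_forall (hψle ν hν)) hbint ?_
      have A1 : ∀ᵐ x ∂σ, ContinuousAt h (Phi z hμ μ x) := by
        rw [← hmap μ (hne μ hμball) (hwne μ hμball)] at hcont
        exact (hemb μ).ae_map_iff.1 hcont
      have hcμ : ‖(z / ‖μ‖ ^ 2) • μ‖ = |z| / ‖μ‖ := by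
        rw [norm_smul, Real.norm_eq_abs, abs_div,
          abs_of_nonneg (by positivity : (0:ℝ) ≤ ‖μ‖^2), sq, div_mul_eq_mul_div,
          mul_div_mul_right _ _ hnμ]
      have hrpos : 0 < M ^ 2 - (|z| / ‖μ‖)^2 := by nlinarith [hMc, hcz]
      have hrne : Real.sqrt (M ^ 2 - (|z| / ‖μ‖)^2) ≠ 0 := ne_of_gt (Real.sqrt_pos.2 hrpos)
      have A2 : ∀ᵐ x ∂σ, ¬ (‖Phi z hμ μ x‖ = M) := by
        rw [ae_iff]
        simp only [not_not]
        refine le_antisymm (le_trans (measure_mono ?_)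
          (le_of_eq (hσnull _ (volume_norm_eq_null n hrne)))) (zero_le)
        intro x hx
        have h10 := phi_norm_sq (z := z) hμ (hne μ hμball) (hwne μ hμball) x
        have hx' : ‖Phi z hμ μ x‖ = M := hx
        rw [hx', hcμ] at h10
        have h11 : ‖x‖^2 = M^2 - (|z|/‖μ‖)^2 := by linarith
        show ‖x‖ = Real.sqrt (M ^ 2 - (|z| / ‖μ‖)^2)
        rw [← h11, Real.sqrt_sq (norm_nonneg x)]
      filter_upwards [A1, A2] with x hx1 hx2
      have hΦc : ContinuousAt (fun ν => Phi z hμ ν x) μ := phi_continuousAt hμ x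
      have hl : 𝓝[s] μ ≤ 𝓝 μ := nhdsWithin_le_nhds
      rcases lt_or_gt_of_ne hx2 with hlt | hgt
      · have hev2 : ∀ᶠ ν in 𝓝[s] μ, ‖Phi z hμ ν x‖ < M :=
          (hΦc.norm.eventually (gt_mem_nhds hlt)).filter_mono hl
        have hh : ContinuousAt (fun ν => h (Phi z hμ ν x)) μ := Tendsto.comp hx1 hΦc
        have htt : Tendsto (fun ν => h (Phi z hμ ν x) • Phi z hμ ν x) (𝓝[s] μ)
            (𝓝 (h (Phi z hμ μ x) • Phi z hμ μ x)) :=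
          (hh.smul hΦc).tendsto.mono_left hl
        have hval : ({x : EuclideanSpace ℝ (Fin n) | ‖Phi z hμ μ x‖ ≤ M}).indicator
            (fun x => h (Phi z hμ μ x) • Phi z hμ μ x) x = h (Phi z hμ μ x) • Phi z hμ μ x :=
          Set.indicator_of_mem
            (show x ∈ {x : EuclideanSpace ℝ (Fin n) | ‖Phi z hμ μ x‖ ≤ M} from le_of_lt hlt) _
        rw [hval]
        refine htt.congr' ?_
        filter_upwards [hev2] with ν hν
        exact (Set.indicator_of_mem
          (show x ∈ {x' : EuclideanSpace ℝ (Fin n) | ‖Phi z hμ ν x'‖ ≤ M} from le_of_lt hν)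
          (fun x' => h (Phi z hμ ν x') • Phi z hμ ν x')).symm
      · have hev2 : ∀ᶠ ν in 𝓝[s] μ, M < ‖Phi z hμ ν x‖ :=
          (hΦc.norm.eventually (lt_mem_nhds hgt)).filter_mono hl
        have hval : ({x : EuclideanSpace ℝ (Fin n) | ‖Phi z hμ μ x‖ ≤ M}).indicator
            (fun x => h (Phi z hμ μ x) • Phi z hμ μ x) x = 0 :=
          Set.indicator_of_notMem
            (show x ∉ {x : EuclideanSpace ℝ (Fin n) | ‖Phi z hμ μ x‖ ≤ M} from not_le.2 hgt) _
        rw [hval]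
        refine tendsto_const_nhds.congr' ?_
        filter_upwards [hev2] with ν hν
        exact (Set.indicator_of_notMem
          (show x ∉ {x' : EuclideanSpace ℝ (Fin n) | ‖Phi z hμ ν x'‖ ≤ M} from not_le.2 hν)
          (fun x' => h (Phi z hμ ν x') • Phi z hμ ν x')).symm
    -- assemble
    have hψdist := (Metric.tendsto_nhds.1 hψtend) (ε/4) (by positivity)
    filter_upwards [hψdist, hballev] with ν h1 h2
    rw [dist_eq_norm]
    have e1 : ∫ x, h (Phi z hμ ν x) • Phi z hμ ν x ∂σ -
        ∫ x, h (Phi z hμ μ x) • Phi z hμ μ x ∂σ =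
        ((∫ x, ({x : EuclideanSpace ℝ (Fin n) | ‖Phi z hμ ν x‖ ≤ M}).indicator
            (fun x => h (Phi z hμ ν x) • Phi z hμ ν x) x ∂σ) -
          ∫ x, ({x : EuclideanSpace ℝ (Fin n) | ‖Phi z hμ μ x‖ ≤ M}).indicator
            (fun x => h (Phi z hμ μ x) • Phi z hμ μ x) x ∂σ) +
        ((∫ x, ({x : EuclideanSpace ℝ (Fin n) | ‖Phi z hμ ν x‖ ≤ M}ᶜ).indicator
            (fun x => h (Phi z hμ ν x) • Phi z hμ ν x) x ∂σ) -
          ∫ x, ({x : EuclideanSpace ℝ (Fin n) | ‖Phi z hμ μ x‖ ≤ M}ᶜ).indicator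
            (fun x => h (Phi z hμ μ x) • Phi z hμ μ x) x ∂σ) := by
      rw [hsplit ν h2, hsplit μ hμball]
      abel
    rw [e1]
    have d1 := h1
    rw [dist_eq_norm] at d1
    calc ‖_ + _‖ ≤ _ := norm_add_le _ _
      _ < ε := by
        have t1 := hτnorm ν h2
        have t2 := hτnorm μ hμball
        have t3 := norm_sub_le
          (∫ x, ({x : EuclideanSpace ℝ (Fin n) | ‖Phi z hμ ν x‖ ≤ M}ᶜ).indicator
            (fun x => h (Phi z hμ ν x) • Phi z hμ ν x) x ∂σ)
          (∫ x, ({x : EuclideanSpace ℝ (Fin n) | ‖Phi z hμ μ x‖ ≤ M}ᶜ).indicator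
            (fun x => h (Phi z hμ μ x) • Phi z hμ μ x) x ∂σ)
        linarith
  -- assemble
  have hG : ContinuousWithinAt
      (fun ν : EuclideanSpace ℝ (Fin (n+1)) =>
        ‖ν‖⁻¹ • ∫ x, h (Phi z hμ ν x) • Phi z hμ ν x ∂σ) s μ := by
    exact ContinuousWithinAt.smul
      ((continuousAt_id.norm.inv₀ hnμ).continuousWithinAt) hT
  refine hG.congr_of_eventuallyEq ?_ ?_
  · filter_upwards [hballev] with ν hν
    rw [hFG ν hν]
  · rw [hFG μ hμball]
end
end
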